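/- arXiv:2601.21121 — 3 statements merged into one kernel-verified Lean document; each statement's English description precedes it below -/
import Mathlib

section
/- Let m₀ be the smallest integer q > 1 with gcd(q, ρ₀) = 1. Then for every integer q > 1 with gcd(q, ρ₀) = 1, the minimum weight satisfies d_q = d_{m₀}. -/
open scoped BigOperators

namespace ArrCode

variable {k n : ℕ}

/-- The integer matrix `G` with entries reduced modulo `q`. -/
def Gmod (G : Matrix (Fin k) (Fin n) ℤ) (q : ℕ) : Matrix (Fin k) (Fin n) (ZMod q) :=
  G.map (Int.cast : ℤ → ZMod q)

/-- The code `C_G(q)` over `ℤ/qℤ` generated by the rows of `G`. -/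
def code (G : Matrix (Fin k) (Fin n) ℤ) (q : ℕ) : Set (Fin n → ZMod q) :=
  Set.range fun u : Fin k → ZMod q => Matrix.vecMul u (Gmod G q)

/-- `H_J(q) = { u ∈ (ℤ/qℤ)^k : u · g^j = 0 for all j ∈ J }`. -/
def HJ (G : Matrix (Fin k) (Fin n) ℤ) (J : Finset (Fin n)) (q : ℕ) :
    Set (Fin k → ZMod q) :=
  {u | ∀ j ∈ J, Matrix.vecMul u (Gmod G q) j = 0}

/-- The rank `r(J)` over `ℚ` of the column submatrix `G_J`. -/
noncomputable def rk (G : Matrix (Fin k) (Fin n) ℤ) (J : Finset (Fin n)) : ℕ :=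
  Matrix.rank (Matrix.of fun (i : Fin k) (j : J) => (G i j.1 : ℚ))

/-- The gcd of all `j × j` minors of the column submatrix `G_J`
(determinants of submatrices with repeated rows or columns vanish,
so this agrees with the usual minor gcd). -/
def minorGcd (G : Matrix (Fin k) (Fin n) ℤ) (J : Finset (Fin n)) (j : ℕ) : ℕ :=
  Finset.gcd Finset.univ fun p : (Fin j → Fin k) × (Fin j → J) =>
    ((G.submatrix p.1 fun l => (p.2 l : Fin n)).det).natAbs

/-- The `ℓ`-th elementary divisor (invariant factor) `e_{ℓ,J}` of `G_J`,
characterized by `e_{1,J} ⋯ e_{j,J} =` gcd of all `j × j` minors of `G_J`. -/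
def elemDiv (G : Matrix (Fin k) (Fin n) ℤ) (J : Finset (Fin n)) (ℓ : ℕ) : ℕ :=
  minorGcd G J ℓ / minorGcd G J (ℓ - 1)

/-- The lcm period `ρ₀ = lcm { e_{r(J),J} : ∅ ≠ J ⊆ E }`. -/
noncomputable def lcmPeriod (G : Matrix (Fin k) (Fin n) ℤ) : ℕ :=
  Finset.lcm ((Finset.univ : Finset (Fin n)).powerset.filter fun J => J ≠ ∅)
    fun J => elemDiv G J (rk G J)

/-- The minimum weight `d_q` of `C_G(q)` (equal to `+∞` when the code is trivial). -/
noncomputable def minWt (G : Matrix (Fin k) (Fin n) ℤ) (q : ℕ) : ℕ∞ :=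
  ⨅ (c : Fin n → ZMod q) (_ : c ∈ code G q) (_ : c ≠ 0), (hammingNorm c : ℕ∞)

/-- `A_{G,i}(q)`: the number of codewords of `C_G(q)` of Hamming weight `i`. -/
noncomputable def A (G : Matrix (Fin k) (Fin n) ℤ) (q i : ℕ) : ℕ :=
  {c ∈ code G q | hammingNorm c = i}.ncard

/-- The characteristic quasi-polynomial value: the number of `u ∈ (ℤ/qℤ)^k`
with every coordinate of `uG` nonzero. -/
noncomputable def chiQuasi (G : Matrix (Fin k) (Fin n) ℤ) (q : ℕ) : ℕ :=
  {u : Fin k → ZMod q | ∀ j, Matrix.vecMul u (Gmod G q) j ≠ 0}.ncard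

/-- `Π_{ℓ=1}^{r(J)} gcd(m, e_{ℓ,J})`. -/
noncomputable def gcdProd (G : Matrix (Fin k) (Fin n) ℤ) (m : ℕ) (J : Finset (Fin n)) : ℕ :=
  ∏ ℓ ∈ Finset.Icc 1 (rk G J), Nat.gcd m (elemDiv G J ℓ)

/-- The constituent polynomial `f_i^m(t) ∈ ℚ[t]`. -/
noncomputable def fPoly (G : Matrix (Fin k) (Fin n) ℤ) (m i : ℕ) : Polynomial ℚ :=
  ∑ J ∈ (Finset.univ : Finset (Fin n)).powerset.filter (fun J => J.card = n - i),
    ∑ K ∈ (Finset.univ : Finset (Fin n)).powerset.filter (fun K => J ⊆ K),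
      Polynomial.C ((-1 : ℚ) ^ (K.card - J.card) *
          (gcdProd G m K : ℚ) / (gcdProd G m Finset.univ : ℚ)) *
        Polynomial.X ^ (rk G Finset.univ - rk G K)

/-- `d'_m`: the least positive `i` such that `f_i^m` is not the zero polynomial. -/
noncomputable def dPrime (G : Matrix (Fin k) (Fin n) ℤ) (m : ℕ) : ℕ :=
  sInf {i : ℕ | 0 < i ∧ fPoly G m i ≠ 0}

end ArrCode

namespace ArrCode

variable {k n : ℕ}

open Matrix Submodule Module

variable (G : Matrix (Fin k) (Fin n) ℤ) (J : Finset (Fin n))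

theorem minorGcd_dvd_det {m : ℕ} (p1 : Fin m → Fin k) (p2 : Fin m → J) :
    (minorGcd G J m : ℤ) ∣ (G.submatrix p1 fun l => (p2 l : Fin n)).det := by
  have h : minorGcd G J m ∣ (G.submatrix p1 fun l => (p2 l : Fin n)).det.natAbs :=
    Finset.gcd_dvd (Finset.mem_univ (⟨p1, p2⟩ : (Fin m → Fin k) × (Fin m → J)))
  have h2 : (minorGcd G J m : ℤ) ∣ ((G.submatrix p1 fun l => (p2 l : Fin n)).det.natAbs : ℤ) :=
    Int.natCast_dvd_natCast.mpr h
  exact h2.trans (Int.natAbs_dvd.mpr dvd_rfl)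

theorem minorGcd_dvd_succ (m : ℕ) : minorGcd G J m ∣ minorGcd G J (m + 1) := by
  apply Finset.dvd_gcd
  intro p hp
  obtain ⟨p1, p2⟩ := p
  rw [← Int.natCast_dvd_natCast]
  refine (Int.dvd_natAbs).mpr ?_
  rw [Matrix.det_succ_column_zero]
  apply Finset.dvd_sum
  intro i _
  apply Dvd.dvd.mul_left
  have : (G.submatrix p1 fun l => ((p2 l : Fin n))).submatrix i.succAbove Fin.succ
      = G.submatrix (p1 ∘ i.succAbove) (fun l => ((p2 ∘ Fin.succ) l : Fin n)) := by
    rw [Matrix.submatrix_submatrix]; rfl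
  rw [this]
  exact minorGcd_dvd_det G J _ _

theorem minorGcd_mul_elemDiv (r : ℕ) (hr : 1 ≤ r) :
    minorGcd G J (r - 1) * elemDiv G J r = minorGcd G J r := by
  rw [elemDiv, Nat.mul_div_cancel']
  obtain ⟨m, rfl⟩ := Nat.exists_eq_add_of_le hr
  rw [Nat.add_comm 1 m]
  simpa using minorGcd_dvd_succ G J m

section FieldLemmas
variable {F : Type*} [Field F] {s : ℕ} {ι : Type*} [Fintype ι]

theorem le_rank_of_det_ne_zero (B : Matrix (Fin k) ι F)
    (f : Fin s → Fin k) (g : Fin s → ι) (h : (B.submatrix f g).det ≠ 0) :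
    s ≤ B.rank := by
  classical
  have hind : LinearIndependent F (fun a : Fin s => (fun i => B i (g a) : Fin k → F)) := by
    rw [Fintype.linearIndependent_iff]
    intro c hc a
    have hu : IsUnit (B.submatrix f g) := (Matrix.isUnit_iff_isUnit_det _).mpr h.isUnit
    have hinj : Function.Injective (B.submatrix f g).mulVec :=
      Matrix.mulVec_injective_iff_isUnit.mpr hu
    have h0 : (B.submatrix f g).mulVec c = 0 := by
      funext b
      have := congrFun hc (f b)
      simpa [Matrix.mulVec, dotProduct, Finset.sum_apply, mul_comm] using this
    have h0' : (B.submatrix f g).mulVec c = (B.submatrix f g).mulVec 0 := by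
      rw [h0, Matrix.mulVec_zero]
    exact congrFun (hinj h0') a
  have hle : span F (Set.range fun a : Fin s => (fun i => B i (g a) : Fin k → F)) ≤
      span F (Set.range Bᵀ) := by
    apply span_mono
    rintro _ ⟨a, rfl⟩
    exact ⟨g a, rfl⟩
  have h1 := finrank_span_eq_card hind
  rw [Matrix.rank_eq_finrank_span_cols]
  calc s = finrank F (span F (Set.range fun a : Fin s => (fun i => B i (g a) : Fin k → F))) := by
        rw [h1, Fintype.card_fin]
    _ ≤ finrank F (span F (Set.range Bᵀ)) := Submodule.finrank_mono hle

theorem exists_det_ne_zero_of_le_rank (B : Matrix (Fin k) ι F) (h : s ≤ B.rank) :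
    ∃ (f : Fin s → Fin k) (g : Fin s → ι), (B.submatrix f g).det ≠ 0 := by
  classical
  obtain ⟨t, htsub, htspan, htind⟩ := exists_linearIndependent F (Set.range Bᵀ)
  have htfin : t.Finite := (Set.finite_range Bᵀ).subset htsub
  haveI : Fintype t := htfin.fintype
  have hcard : s ≤ Fintype.card t := by
    have h1 : finrank F (span F t) = t.toFinset.card := finrank_span_set_eq_card htind
    have h2 : B.rank = finrank F (span F t) := by
      rw [Matrix.rank_eq_finrank_span_cols, htspan]
      rfl
    rw [h2, h1, Set.toFinset_card] at h
    exact h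
  obtain ⟨e⟩ : Nonempty (Fin s ↪ t) := by
    apply Function.Embedding.nonempty_of_card_le
    simpa using hcard
  have hmem : ∀ a : Fin s, ((e a : t) : Fin k → F) ∈ Set.range Bᵀ := fun a => htsub (e a).2
  choose g hg using hmem
  set M : Matrix (Fin s) (Fin k) F := Matrix.of (fun a i => B i (g a)) with hM
  have hMeq : (fun a : Fin s => M a) = fun a => ((e a : t) : Fin k → F) := by
    funext a
    exact hg a
  have hMrows : LinearIndependent F (fun a : Fin s => M a) := by
    rw [hMeq]; exact htind.comp e e.injective
  have hMrank : M.rank = s := by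
    have := hMrows.rank_matrix
    simpa using this
  have hMT : Mᵀ.rank = s := by rw [Matrix.rank_transpose]; exact hMrank
  have hspan_top : span F (Set.range Mᵀ) = ⊤ := by
    apply Submodule.eq_top_of_finrank_eq
    rw [show Set.range Mᵀ = Set.range (Mᵀ).row from rfl, ← Matrix.rank_eq_finrank_span_row, hMT]
    simp [Module.finrank_pi]
  obtain ⟨t', ht'sub, ht'span, ht'ind⟩ := exists_linearIndependent F (Set.range Mᵀ)
  have ht'fin : t'.Finite := (Set.finite_range Mᵀ).subset ht'sub
  haveI : Fintype t' := ht'fin.fintype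
  have hcard' : s ≤ Fintype.card t' := by
    have h1 : finrank F (span F t') = t'.toFinset.card := finrank_span_set_eq_card ht'ind
    rw [ht'span, hspan_top, finrank_top] at h1
    rw [← Set.toFinset_card, ← h1]
    simp [Module.finrank_pi]
  obtain ⟨e'⟩ : Nonempty (Fin s ↪ t') := by
    apply Function.Embedding.nonempty_of_card_le
    simpa using hcard'
  have hmem' : ∀ a : Fin s, ((e' a : t') : Fin s → F) ∈ Set.range Mᵀ := fun a => ht'sub (e' a).2
  choose f hf using hmem'
  refine ⟨f, g, ?_⟩
  have hrows : LinearIndependent F (fun a : Fin s => (B.submatrix f g) a) := by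
    have heq : (fun a : Fin s => (B.submatrix f g) a) = fun a => ((e' a : t') : Fin s → F) := by
      funext a
      have := hf a
      funext b
      have hb := congrFun this b
      simpa [Matrix.submatrix, Matrix.transpose, hM] using hb
    rw [heq]
    exact ht'ind.comp e' e'.injective
  have hu : IsUnit (B.submatrix f g) := Matrix.linearIndependent_rows_iff_isUnit.mp hrows
  exact ((Matrix.isUnit_iff_isUnit_det _).mp hu).ne_zero

end FieldLemmas

/-- The rational matrix whose rank defines `rk`. -/
def BQ (G : Matrix (Fin k) (Fin n) ℤ) (J : Finset (Fin n)) : Matrix (Fin k) J ℚ :=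
  Matrix.of fun (i : Fin k) (j : J) => (G i j.1 : ℚ)

theorem rk_eq_rank : rk G J = (BQ G J).rank := rfl

theorem det_cast_eq {F : Type*} [CommRing F] {m : ℕ} (p1 : Fin m → Fin k) (p2 : Fin m → J) :
    ((Matrix.of fun (i : Fin k) (j : J) => ((G i j.1 : ℤ) : F)).submatrix p1 p2).det
      = (((G.submatrix p1 fun l => (p2 l : Fin n)).det : ℤ) : F) := by
  have := RingHom.map_det (Int.castRingHom F) (G.submatrix p1 fun l => (p2 l : Fin n))
  rw [show (((G.submatrix p1 fun l => (p2 l : Fin n)).det : ℤ) : F)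
      = (Int.castRingHom F) (G.submatrix p1 fun l => (p2 l : Fin n)).det from rfl, this]
  rfl

theorem le_rk_iff (s : ℕ) : s ≤ rk G J ↔
    ∃ (p1 : Fin s → Fin k) (p2 : Fin s → J),
      (G.submatrix p1 fun l => (p2 l : Fin n)).det ≠ 0 := by
  constructor
  · intro h
    obtain ⟨f, g, hd⟩ := exists_det_ne_zero_of_le_rank (BQ G J) h
    refine ⟨f, g, fun h0 => hd ?_⟩
    have := det_cast_eq (F := ℚ) G J f g
    rw [BQ]
    rw [this, h0]
    simp
  · rintro ⟨p1, p2, hd⟩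
    apply le_rank_of_det_ne_zero (BQ G J) p1 p2
    rw [BQ, det_cast_eq (F := ℚ) G J p1 p2]
    exact_mod_cast hd

theorem rk_mono {K : Finset (Fin n)} (h : J ⊆ K) : rk G J ≤ rk G K := by
  obtain ⟨p1, p2, hd⟩ := (le_rk_iff G J (rk G J)).mp le_rfl
  exact (le_rk_iff G K (rk G J)).mpr ⟨p1, fun l => ⟨(p2 l : Fin n), h (p2 l).2⟩, hd⟩

theorem rk_pos (hG : ∀ j : Fin n, ∃ i : Fin k, G i j ≠ 0) (hJ : J.Nonempty) : 1 ≤ rk G J := by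
  obtain ⟨j, hj⟩ := hJ
  obtain ⟨i, hi⟩ := hG j
  refine (le_rk_iff G J 1).mpr ⟨fun _ => i, fun _ => ⟨j, hj⟩, ?_⟩
  rw [Matrix.det_fin_one]
  exact hi

theorem minorGcd_ne_zero {s : ℕ} (hs : s ≤ rk G J) : minorGcd G J s ≠ 0 := by
  obtain ⟨p1, p2, hd⟩ := (le_rk_iff G J s).mp hs
  intro h0
  rw [minorGcd, Finset.gcd_eq_zero_iff] at h0
  exact hd (Int.natAbs_eq_zero.mp (h0 ⟨p1, p2⟩ (Finset.mem_univ _)))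

theorem le_rankZMod_iff (p : ℕ) [Fact p.Prime] (s : ℕ) :
    s ≤ (Matrix.of fun (i : Fin k) (j : J) => ((G i j.1 : ℤ) : ZMod p)).rank ↔
      ∃ (p1 : Fin s → Fin k) (p2 : Fin s → J),
        ¬ (p : ℤ) ∣ (G.submatrix p1 fun l => (p2 l : Fin n)).det := by
  constructor
  · intro h
    obtain ⟨f, g, hd⟩ := exists_det_ne_zero_of_le_rank _ h
    refine ⟨f, g, fun h0 => hd ?_⟩
    rw [det_cast_eq (F := ZMod p) G J f g]
    exact (ZMod.intCast_zmod_eq_zero_iff_dvd _ p).mpr h0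
  · rintro ⟨p1, p2, hd⟩
    apply le_rank_of_det_ne_zero _ p1 p2
    rw [det_cast_eq (F := ZMod p) G J p1 p2]
    intro h0
    exact hd ((ZMod.intCast_zmod_eq_zero_iff_dvd _ p).mp h0)

theorem natCast_dvd_int {m : ℕ} {z : ℤ} : (m : ℤ) ∣ z ↔ m ∣ z.natAbs := by
  rw [← Int.natAbs_dvd_natAbs, Int.natAbs_natCast]

theorem exists_minor_not_dvd (r : ℕ) (hr : 1 ≤ r) (hd0 : minorGcd G J (r - 1) ≠ 0)
    {p : ℕ} (hp : p.Prime) (hpe : ¬ p ∣ elemDiv G J r) :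
    ∃ (p1 : Fin r → Fin k) (p2 : Fin r → J),
      ¬ (p : ℤ) ∣ (G.submatrix p1 fun l => (p2 l : Fin n)).det := by
  classical
  obtain ⟨r', rfl⟩ := Nat.exists_eq_succ_of_ne_zero (Nat.one_le_iff_ne_zero.mp hr)
  set d0 := minorGcd G J (r' + 1 - 1) with hd0def
  set e := elemDiv G J (r' + 1) with hedef
  set d1 := minorGcd G J (r' + 1) with hd1def
  have hmul : d0 * e = d1 := minorGcd_mul_elemDiv G J (r' + 1) (Nat.succ_le_succ (Nat.zero_le _))
  have he0 : e ≠ 0 := fun h => hpe (h ▸ dvd_zero p)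
  have hd1 : d1 ≠ 0 := hmul ▸ mul_ne_zero hd0 he0
  set v := d0.factorization p with hvdef
  have hpowd0 : p ^ v ∣ d0 := Nat.ordProj_dvd d0 p
  have hvd1 : d1.factorization p = v := by
    rw [← hmul, Nat.factorization_mul hd0 he0]
    simp [Nat.factorization_eq_zero_of_not_dvd hpe, hvdef]
  have hv1 : ¬ p ^ (v + 1) ∣ d1 := by
    rw [Nat.Prime.pow_dvd_iff_le_factorization hp hd1, hvd1]
    omega
  -- find a minor whose natAbs is not divisible by p^(v+1)
  have hex : ∃ q : (Fin (r' + 1) → Fin k) × (Fin (r' + 1) → J),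
      ¬ p ^ (v + 1) ∣ ((G.submatrix q.1 fun l => (q.2 l : Fin n)).det).natAbs := by
    by_contra hall
    push_neg at hall
    exact hv1 (Finset.dvd_gcd fun q _ => hall q)
  obtain ⟨⟨p1, p2⟩, hq⟩ := hex
  set M := G.submatrix p1 fun l => (p2 l : Fin n) with hMdef
  set D := M.det with hDdef
  have hDv : ((p : ℤ)) ^ v ∣ D := by
    rw [show ((p:ℤ))^v = ((p^v : ℕ) : ℤ) by push_cast; ring]
    have h1 : p ^ v ∣ D.natAbs := hpowd0.trans ((minorGcd_dvd_succ G J r').trans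
      (Finset.gcd_dvd (Finset.mem_univ (⟨p1, p2⟩ : (Fin (r' + 1) → Fin k) × (Fin (r' + 1) → J)))))
    exact natCast_dvd_int.mpr (by simpa using h1)
  have hDv1 : ¬ ((p : ℤ)) ^ (v + 1) ∣ D := by
    intro hc
    apply hq
    have := natCast_dvd_int.mp (by exact_mod_cast hc)
    simpa using this
  -- adjugate entries divisible by p^v
  have hadj : ∀ a b, ((p : ℤ)) ^ v ∣ M.adjugate a b := by
    intro a b
    rw [Matrix.adjugate_fin_succ_eq_det_submatrix]
    apply Dvd.dvd.mul_left
    have hsub : M.submatrix b.succAbove a.succAbove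
        = G.submatrix (p1 ∘ b.succAbove) fun l => ((p2 ∘ a.succAbove) l : Fin n) := by
      rw [hMdef, Matrix.submatrix_submatrix]; rfl
    rw [hsub, show ((p:ℤ))^v = ((p^v : ℕ) : ℤ) by push_cast; ring]
    have h1 : p ^ v ∣ ((G.submatrix (p1 ∘ b.succAbove) fun l => ((p2 ∘ a.succAbove) l : Fin n)).det).natAbs :=
      hpowd0.trans (Finset.gcd_dvd (Finset.mem_univ
        (⟨p1 ∘ b.succAbove, p2 ∘ a.succAbove⟩ : (Fin r' → Fin k) × (Fin r' → J))))
    exact natCast_dvd_int.mpr (by simpa using h1)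
  set N : Matrix (Fin (r' + 1)) (Fin (r' + 1)) ℤ := Matrix.of fun a b => M.adjugate a b / (p : ℤ) ^ v with hNdef
  have hN : ∀ a b, ((p : ℤ)) ^ v * N a b = M.adjugate a b := fun a b =>
    Int.mul_ediv_cancel' (hadj a b)
  set c := D / (p : ℤ) ^ v with hcdef
  have hc : ((p : ℤ)) ^ v * c = D := Int.mul_ediv_cancel' hDv
  have hpc : ¬ (p : ℤ) ∣ c := by
    intro hdvd
    obtain ⟨t, ht⟩ := hdvd
    apply hDv1
    refine ⟨t, ?_⟩
    rw [← hc, ht]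
    ring
  have hMN : M * N = c • (1 : Matrix (Fin (r' + 1)) (Fin (r' + 1)) ℤ) := by
    ext a b
    have hpv : ((p : ℤ)) ^ v ≠ 0 := pow_ne_zero _ (by exact_mod_cast hp.ne_zero)
    apply mul_left_cancel₀ hpv
    have lhs : ((p : ℤ)) ^ v * (M * N) a b = (M * M.adjugate) a b := by
      rw [Matrix.mul_apply, Matrix.mul_apply, Finset.mul_sum]
      congr 1
      funext x
      rw [← hN x b]
      ring
    rw [lhs, Matrix.mul_adjugate]
    have : (D • (1 : Matrix (Fin (r' + 1)) (Fin (r' + 1)) ℤ)) a b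
        = D * (1 : Matrix (Fin (r' + 1)) (Fin (r' + 1)) ℤ) a b := rfl
    rw [this, ← hc]
    have : (c • (1 : Matrix (Fin (r' + 1)) (Fin (r' + 1)) ℤ)) a b
        = c * (1 : Matrix (Fin (r' + 1)) (Fin (r' + 1)) ℤ) a b := rfl
    rw [this]
    ring
  have hdet : D * N.det = c ^ (r' + 1) := by
    have := congrArg Matrix.det hMN
    rw [Matrix.det_mul, Matrix.det_smul, Matrix.det_one, mul_one] at this
    simpa [hDdef] using this
  refine ⟨p1, p2, ?_⟩
  intro hpD
  have : (p : ℤ) ∣ c ^ (r' + 1) := hdet ▸ hpD.mul_right N.det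
  have hprime : Prime ((p : ℤ)) := Int.prime_iff_natAbs_prime.mpr (by simpa using hp)
  exact hpc (hprime.dvd_of_dvd_pow this)

theorem indep_of_det_ne_zero {F : Type*} [Field F] {s : ℕ} {ι : Type*} [Fintype ι]
    (B : Matrix (Fin k) ι F) (f : Fin s → Fin k) (g : Fin s → ι)
    (h : (B.submatrix f g).det ≠ 0) :
    LinearIndependent F (fun a : Fin s => (fun i => B i (g a) : Fin k → F)) := by
  classical
  rw [Fintype.linearIndependent_iff]
  intro c hc a
  have hu : IsUnit (B.submatrix f g) := (Matrix.isUnit_iff_isUnit_det _).mpr h.isUnit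
  have hinj : Function.Injective (B.submatrix f g).mulVec :=
    Matrix.mulVec_injective_iff_isUnit.mpr hu
  have h0 : (B.submatrix f g).mulVec c = 0 := by
    funext b
    have := congrFun hc (f b)
    simpa [Matrix.mulVec, dotProduct, Finset.sum_apply, mul_comm] using this
  have h0' : (B.submatrix f g).mulVec c = (B.submatrix f g).mulVec 0 := by
    rw [h0, Matrix.mulVec_zero]
  exact congrFun (hinj h0') a

set_option maxHeartbeats 1000000 in
theorem cramer_combination (j : Fin n)
    (hj : (fun i => (G i j : ℚ)) ∈ span ℚ (Set.range (BQ G J)ᵀ)) :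
    ∃ c : J → ℤ, ∀ i, (minorGcd G J (rk G J) : ℤ) * G i j
      = ∑ l : J, c l * G i (l : Fin n) := by
  classical
  set r := rk G J with hrdef
  set S : Ideal ℤ :=
    { carrier := {d : ℤ | ∃ c : J → ℤ, ∀ i, d * G i j = ∑ l : J, c l * G i (l : Fin n)}
      add_mem' := by
        rintro a b ⟨ca, hca⟩ ⟨cb, hcb⟩
        refine ⟨ca + cb, fun i => ?_⟩
        simp only [Pi.add_apply, add_mul, hca i, hcb i, ← Finset.sum_add_distrib]
      zero_mem' := ⟨0, fun i => by simp⟩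
      smul_mem' := by
        rintro z d ⟨c, hc⟩
        refine ⟨z • c, fun i => ?_⟩
        simp only [smul_eq_mul, Pi.smul_apply, mul_assoc, hc i, Finset.mul_sum] } with hSdef
  have hminor : ∀ (p1 : Fin r → Fin k) (p2 : Fin r → J),
      (G.submatrix p1 fun l => (p2 l : Fin n)).det ∈ S := by
    intro p1 p2
    set D := (G.submatrix p1 fun l => (p2 l : Fin n)).det with hDdef
    by_cases hD : D = 0
    · exact ⟨0, fun i => by simp [hD]⟩
    -- the ℚ-submatrix has nonzero determinant
    have hDQ : ((BQ G J).submatrix p1 p2).det ≠ 0 := by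
      rw [BQ, det_cast_eq (F := ℚ) G J p1 p2]
      exact_mod_cast hD
    -- columns indexed by p2 are independent and span the column space
    have hind := indep_of_det_ne_zero (BQ G J) p1 p2 hDQ
    set W := span ℚ (Set.range fun a : Fin r => (fun i => (BQ G J) i (p2 a) : Fin k → ℚ))
      with hWdef
    have hWle : W ≤ span ℚ (Set.range (BQ G J)ᵀ) := by
      apply span_le.mpr
      rintro _ ⟨a, rfl⟩
      exact subset_span ⟨p2 a, rfl⟩
    have hWeq : W = span ℚ (Set.range (BQ G J)ᵀ) := by
      apply Submodule.eq_of_le_of_finrank_le hWle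
      rw [show Set.range (BQ G J)ᵀ = Set.range (BQ G J).col from rfl, ← Matrix.rank_eq_finrank_span_cols, finrank_span_eq_card hind, Fintype.card_fin]
      exact le_of_eq (rk_eq_rank G J)
    have hjW : (fun i => (G i j : ℚ)) ∈ W := hWeq ▸ hj
    rw [hWdef, mem_span_range_iff_exists_fun] at hjW
    obtain ⟨x, hx⟩ := hjW
    -- Cramer: D • x is integral
    set M := G.submatrix p1 fun l => (p2 l : Fin n) with hMdef
    set MQ := (BQ G J).submatrix p1 p2 with hMQdef
    have hMQmap : MQ = M.map (Int.cast : ℤ → ℚ) := rfl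
    set y : Fin r → ℤ := fun a => ∑ b, M.adjugate a b * G (p1 b) j with hydef
    have hxa : ∀ a : Fin r, ∑ b, x b * ((G (p1 a) ((p2 b : Fin n)) : ℚ)) = (G (p1 a) j : ℚ) := by
      intro a
      have := congrFun hx (p1 a)
      simpa [Finset.sum_apply, BQ] using this
    set M := G.submatrix p1 fun l => (p2 l : Fin n) with hMdef
    set MQ := (BQ G J).submatrix p1 p2 with hMQdef
    have hMQmap : MQ = M.map (Int.cast : ℤ → ℚ) := rfl
    set y : Fin r → ℤ := fun a => ∑ b, M.adjugate a b * G (p1 b) j with hydef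
    have hMx : MQ.mulVec x = fun a => (G (p1 a) j : ℚ) := by
      funext a
      rw [Matrix.mulVec, dotProduct, ← hxa a]
      exact Finset.sum_congr rfl fun b _ => mul_comm _ _
    have hadjmap : MQ.adjugate = (M.adjugate).map (Int.cast : ℤ → ℚ) := by
      rw [hMQmap]
      exact (RingHom.map_adjugate (Int.castRingHom ℚ) M).symm
    -- adj MQ *ᵥ (MQ *ᵥ x) = det MQ • x
    have hkey : MQ.det • x = fun a => ((y a : ℤ) : ℚ) := by
      have h1 : MQ.adjugate.mulVec (MQ.mulVec x) = (MQ.adjugate * MQ).mulVec x :=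
        Matrix.mulVec_mulVec _ _ _
      rw [Matrix.adjugate_mul, hMx] at h1
      have h2 : ((MQ.det • (1 : Matrix (Fin r) (Fin r) ℚ)).mulVec x) = MQ.det • x := by
        rw [Matrix.smul_mulVec, Matrix.one_mulVec]
      rw [h2] at h1
      rw [← h1]
      funext a
      rw [Matrix.mulVec, dotProduct, hydef]
      push_cast
      refine Finset.sum_congr rfl fun b _ => ?_
      have hab : MQ.adjugate a b = ((M.adjugate a b : ℤ) : ℚ) := by
        rw [hadjmap, Matrix.map_apply]
      rw [hab]
    have hDQ2 : MQ.det = ((D : ℤ) : ℚ) := det_cast_eq (F := ℚ) G J p1 p2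
    have hDx : ∀ a, (D : ℚ) * x a = ((y a : ℤ) : ℚ) := by
      intro a
      have := congrFun hkey a
      rw [hDQ2] at this
      simpa using this
    -- integral combination indexed by Fin r
    have hcomb : ∀ i, (D : ℚ) * (G i j : ℚ) = ∑ a, ((y a : ℤ) : ℚ) * (G i ((p2 a : Fin n)) : ℚ) := by
      intro i
      have := congrFun hx i
      simp only [Finset.sum_apply, Pi.smul_apply, smul_eq_mul] at this
      calc (D : ℚ) * (G i j : ℚ) = (D : ℚ) * ∑ a, x a * ((BQ G J) i (p2 a)) := by rw [this]
        _ = ∑ a, ((D:ℚ) * x a) * ((BQ G J) i (p2 a)) := by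
            rw [Finset.mul_sum]; exact Finset.sum_congr rfl fun a _ => by ring
        _ = ∑ a, ((y a : ℤ) : ℚ) * (G i ((p2 a : Fin n)) : ℚ) := by
            exact Finset.sum_congr rfl fun a _ => by rw [hDx a]; rfl
    -- back to ℤ
    have hcombZ : ∀ i, D * G i j = ∑ a, y a * G i ((p2 a : Fin n)) := by
      intro i
      have := hcomb i
      exact_mod_cast this
    -- regroup by column index
    classical
    refine ⟨fun l => ∑ a ∈ Finset.univ.filter (fun a => p2 a = l), y a, fun i => ?_⟩
    rw [hcombZ i]
    rw [← Finset.sum_fiberwise_of_maps_to (fun a _ => Finset.mem_univ (p2 a))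
      (fun a => y a * G i ((p2 a : Fin n)))]
    apply Finset.sum_congr rfl
    intro l _
    rw [Finset.sum_mul]
    apply Finset.sum_congr rfl
    intro a ha
    rw [Finset.mem_filter] at ha
    rw [ha.2]
  -- now the ideal argument
  have hprinc : Submodule.IsPrincipal S := inferInstance
  obtain ⟨g0, hg0⟩ := hprinc
  have hdvd : ∀ z ∈ S, g0 ∣ z := by
    intro z hz
    rw [hg0] at hz
    exact Ideal.mem_span_singleton.mp hz
  have hgcdS : (minorGcd G J r : ℤ) ∈ S := by
    have hdvd2 : g0.natAbs ∣ minorGcd G J r := by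
      rw [minorGcd]
      apply Finset.dvd_gcd
      rintro ⟨p1, p2⟩ _
      exact Int.natAbs_dvd_natAbs.mpr (hdvd _ (hminor p1 p2))
    have h3 : ((g0.natAbs : ℕ) : ℤ) ∣ (minorGcd G J r : ℤ) := Int.natCast_dvd_natCast.mpr hdvd2
    have hg0d : g0 ∣ (minorGcd G J r : ℤ) := Int.natAbs_dvd.mp h3
    rw [hg0]
    exact Ideal.mem_span_singleton.mpr hg0d
  obtain ⟨c, hc⟩ := hgcdS
  exact ⟨c, hc⟩

theorem elemDiv_not_dvd {q : ℕ} (hq : 1 < q) (hgcd : Nat.gcd q (lcmPeriod G) = 1)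
    {p : ℕ} (hp : p.Prime) (hpq : p ∣ q) (hJne : J ≠ ∅) :
    ¬ p ∣ elemDiv G J (rk G J) := by
  intro hdvd
  have hmem : J ∈ (Finset.univ : Finset (Fin n)).powerset.filter fun K => K ≠ ∅ := by
    rw [Finset.mem_filter, Finset.mem_powerset]
    exact ⟨Finset.subset_univ J, hJne⟩
  have hlcm : elemDiv G J (rk G J) ∣ lcmPeriod G := Finset.dvd_lcm hmem
  have : p ∣ Nat.gcd q (lcmPeriod G) := Nat.dvd_gcd hpq (hdvd.trans hlcm)
  rw [hgcd] at this
  have := Nat.le_of_dvd one_pos this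
  have h2 := hp.two_le
  omega


theorem exists_minor_not_dvd_q (hG : ∀ j : Fin n, ∃ i : Fin k, G i j ≠ 0)
    {q : ℕ} (hq : 1 < q) (hgcd : Nat.gcd q (lcmPeriod G) = 1)
    {p : ℕ} (hp : p.Prime) (hpq : p ∣ q) (hJne : J.Nonempty) :
    ∃ (p1 : Fin (rk G J) → Fin k) (p2 : Fin (rk G J) → J),
      ¬ (p : ℤ) ∣ (G.submatrix p1 fun l => (p2 l : Fin n)).det := by
  have hr1 : 1 ≤ rk G J := rk_pos G J hG hJne
  exact exists_minor_not_dvd G J (rk G J) hr1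
    (minorGcd_ne_zero G J (Nat.sub_le _ _ |>.trans le_rfl))
    hp (elemDiv_not_dvd G J hq hgcd hp hpq (Finset.nonempty_iff_ne_empty.mp hJne))

theorem not_dvd_minorGcd_q (hG : ∀ j : Fin n, ∃ i : Fin k, G i j ≠ 0)
    {q : ℕ} (hq : 1 < q) (hgcd : Nat.gcd q (lcmPeriod G) = 1)
    {p : ℕ} (hp : p.Prime) (hpq : p ∣ q) (hJne : J.Nonempty) :
    ¬ p ∣ minorGcd G J (rk G J) := by
  intro hdvd
  obtain ⟨p1, p2, hnd⟩ := exists_minor_not_dvd_q G J hG hq hgcd hp hpq hJne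
  apply hnd
  have h1 : (p : ℤ) ∣ (minorGcd G J (rk G J) : ℤ) := Int.natCast_dvd_natCast.mpr hdvd
  exact h1.trans (minorGcd_dvd_det G J p1 p2)

theorem rk_empty : rk G ∅ = 0 := by
  have h := Matrix.rank_le_card_width (BQ G (∅ : Finset (Fin n)))
  rw [rk_eq_rank]
  simpa using h

theorem col_mem_span (j : Fin n) (hJrk : rk G J = rk G Finset.univ) :
    (fun i => (G i j : ℚ)) ∈ span ℚ (Set.range (BQ G J)ᵀ) := by
  have hle : span ℚ (Set.range (BQ G J)ᵀ) ≤ span ℚ (Set.range (BQ G (Finset.univ : Finset (Fin n)))ᵀ) := by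
    apply span_le.mpr
    rintro _ ⟨l, rfl⟩
    apply subset_span
    exact ⟨⟨(l : Fin n), Finset.mem_univ _⟩, rfl⟩
  have heq : span ℚ (Set.range (BQ G J)ᵀ) = span ℚ (Set.range (BQ G (Finset.univ : Finset (Fin n)))ᵀ) := by
    apply Submodule.eq_of_le_of_finrank_le hle
    rw [show Set.range (BQ G J)ᵀ = Set.range (BQ G J).col from rfl,
      show Set.range (BQ G (Finset.univ : Finset (Fin n)))ᵀ = Set.range (BQ G Finset.univ).col from rfl,
      ← Matrix.rank_eq_finrank_span_cols, ← Matrix.rank_eq_finrank_span_cols,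
      ← rk_eq_rank, ← rk_eq_rank, hJrk]
  rw [heq]
  apply subset_span
  exact ⟨⟨j, Finset.mem_univ _⟩, rfl⟩

theorem vecMul_eq_zero_of_rk_eq (hG : ∀ j : Fin n, ∃ i : Fin k, G i j ≠ 0) (hn : 1 ≤ n)
    {q : ℕ} (hq : 1 < q) (hgcd : Nat.gcd q (lcmPeriod G) = 1)
    (hJrk : rk G J = rk G Finset.univ)
    (u : Fin k → ZMod q) (hu : ∀ l ∈ J, Matrix.vecMul u (Gmod G q) l = 0) :
    Matrix.vecMul u (Gmod G q) = 0 := by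
  haveI : NeZero q := ⟨by omega⟩
  haveI : Nonempty (Fin n) := ⟨⟨0, hn⟩⟩
  have hJne : J.Nonempty := by
    rcases J.eq_empty_or_nonempty with h | h
    · exfalso
      have h1 : 1 ≤ rk G (Finset.univ : Finset (Fin n)) :=
        rk_pos G Finset.univ hG Finset.univ_nonempty
      rw [h, rk_empty] at hJrk
      omega
    · exact h
  set d := minorGcd G J (rk G J) with hddef
  have hco : Nat.Coprime d q := by
    rw [Nat.Coprime]
    by_contra hne
    have hg0 : Nat.gcd d q ≠ 0 := by
      intro h0
      exact (by omega : q ≠ 0) (Nat.eq_zero_of_gcd_eq_zero_right h0)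
    set p := (Nat.gcd d q).minFac with hpdef
    have hgcd2 : 2 ≤ Nat.gcd d q := by
      rcases Nat.lt_or_ge (Nat.gcd d q) 2 with h | h
      · interval_cases (Nat.gcd d q) <;> simp_all
      · exact h
    have hp : p.Prime := Nat.minFac_prime (by omega)
    have hpd : p ∣ d := (Nat.minFac_dvd _).trans (Nat.gcd_dvd_left _ _)
    have hpq : p ∣ q := (Nat.minFac_dvd _).trans (Nat.gcd_dvd_right _ _)
    exact not_dvd_minorGcd_q G J hG hq hgcd hp hpq hJne hpd
  have hunit : IsUnit ((d : ZMod q)) := by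
    rw [ZMod.isUnit_iff_coprime]
    exact hco
  funext j
  obtain ⟨c, hc⟩ := cramer_combination G J j (col_mem_span G J j hJrk)
  have hzero : (d : ZMod q) * Matrix.vecMul u (Gmod G q) j = 0 := by
    have expand : Matrix.vecMul u (Gmod G q) j = ∑ i, u i * ((G i j : ℤ) : ZMod q) := by
      rw [Matrix.vecMul, dotProduct]
      rfl
    rw [expand, Finset.mul_sum]
    have step : ∀ i, (d : ZMod q) * (u i * ((G i j : ℤ) : ZMod q))
        = u i * ((∑ l : J, c l * G i (l : Fin n) : ℤ) : ZMod q) := by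
      intro i
      rw [← hc i]
      push_cast
      ring
    rw [Finset.sum_congr rfl fun i _ => step i]
    have swap : ∑ i, u i * ((∑ l : J, c l * G i (l : Fin n) : ℤ) : ZMod q)
        = ∑ l : J, ((c l : ℤ) : ZMod q) * ∑ i, u i * ((G i (l : Fin n) : ℤ) : ZMod q) := by
      push_cast
      simp only [Finset.mul_sum]
      rw [Finset.sum_comm]
      exact Finset.sum_congr rfl fun l _ => Finset.sum_congr rfl fun i _ => by ring
    rw [swap]
    apply Finset.sum_eq_zero
    intro l _
    have : ∑ i, u i * ((G i (l : Fin n) : ℤ) : ZMod q) = Matrix.vecMul u (Gmod G q) l := by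
      rw [Matrix.vecMul, dotProduct]
      rfl
    rw [this, hu (l : Fin n) l.2, mul_zero]
  have := hunit.mul_right_eq_zero.mp hzero
  simpa using this

theorem exists_good_u (hG : ∀ j : Fin n, ∃ i : Fin k, G i j ≠ 0) (hn : 1 ≤ n)
    {q : ℕ} (hq : 1 < q) (hgcd : Nat.gcd q (lcmPeriod G) = 1)
    (hJrk : rk G J < rk G Finset.univ) :
    ∃ u : Fin k → ZMod q, (∀ l ∈ J, Matrix.vecMul u (Gmod G q) l = 0) ∧
      Matrix.vecMul u (Gmod G q) ≠ 0 := by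
  classical
  haveI : NeZero q := ⟨by omega⟩
  set p := q.minFac with hpdef
  have hp : p.Prime := Nat.minFac_prime (by omega)
  have hpq : p ∣ q := Nat.minFac_dvd q
  haveI : Fact p.Prime := ⟨hp⟩
  set Ap : (K : Finset (Fin n)) → Matrix (Fin k) K (ZMod p) :=
    fun K => Matrix.of fun (i : Fin k) (j : K) => ((G i j.1 : ℤ) : ZMod p) with hApdef
  have hrank : ∀ K : Finset (Fin n), (Ap K).rank = rk G K := by
    intro K
    apply le_antisymm
    · obtain ⟨p1, p2, hnd⟩ := (le_rankZMod_iff G K p ((Ap K).rank)).mp le_rfl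
      exact (le_rk_iff G K _).mpr ⟨p1, p2, fun h0 => hnd (h0 ▸ dvd_zero _)⟩
    · rcases K.eq_empty_or_nonempty with hK | hK
      · subst hK; rw [rk_empty]; exact Nat.zero_le _
      · exact (le_rankZMod_iff G K p _).mpr (exists_minor_not_dvd_q G K hG hq hgcd hp hpq hK)
  set Φ : (K : Finset (Fin n)) → (Fin k → ZMod p) →ₗ[ZMod p] (K → ZMod p) :=
    fun K => ((Ap K)ᵀ).mulVecLin with hΦdef
  have hker : ∀ K : Finset (Fin n), finrank (ZMod p) (LinearMap.ker (Φ K)) = k - rk G K := by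
    intro K
    have h1 := LinearMap.finrank_range_add_finrank_ker (Φ K)
    have h2 : finrank (ZMod p) (LinearMap.range (Φ K)) = rk G K := by
      have : (Ap K)ᵀ.rank = finrank (ZMod p) (LinearMap.range (Φ K)) := rfl
      rw [← this, Matrix.rank_transpose, hrank K]
    rw [h2] at h1
    have h3 : finrank (ZMod p) (Fin k → ZMod p) = k := by
      simp [Module.finrank_pi]
    rw [h3] at h1
    omega
  have hrk_le : rk G (Finset.univ : Finset (Fin n)) ≤ k := by
    have := Matrix.rank_le_card_height (BQ G (Finset.univ : Finset (Fin n)))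
    rw [rk_eq_rank]
    simpa using this
  have hsub : LinearMap.ker (Φ Finset.univ) ≤ LinearMap.ker (Φ J) := by
    intro u hu
    rw [LinearMap.mem_ker] at hu ⊢
    funext l
    have := congrFun hu ⟨(l : Fin n), Finset.mem_univ _⟩
    simpa [hΦdef, hApdef, Matrix.mulVecLin_apply, Matrix.mulVec, Matrix.vecMul, dotProduct] using this
  have hlt : ¬ LinearMap.ker (Φ J) ≤ LinearMap.ker (Φ Finset.univ) := by
    intro hle
    have h1 := Submodule.finrank_mono hle
    rw [hker J, hker Finset.univ] at h1
    omega
  obtain ⟨u0, hu0J, hu0E⟩ := SetLike.not_le_iff_exists.mp hlt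
  rw [LinearMap.mem_ker] at hu0J
  have hu0E' : Φ Finset.univ u0 ≠ 0 := fun h => hu0E (LinearMap.mem_ker.mpr h)
  obtain ⟨j0sub, hj0pre⟩ := Function.ne_iff.mp hu0E'
  have hj0 : Φ Finset.univ u0 j0sub ≠ 0 := by simpa using hj0pre
  set j0 := (j0sub : Fin n) with hj0def
  -- integer lift
  set SZ : Fin n → ℤ := fun x => ∑ i, ((u0 i).val : ℤ) * G i x with hSZdef
  have hcast : ∀ x : Fin n, ((SZ x : ℤ) : ZMod p) = ∑ i, u0 i * ((G i x : ℤ) : ZMod p) := by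
    intro x
    rw [hSZdef]
    push_cast
    apply Finset.sum_congr rfl
    intro i _
    congr 1
    rw [ZMod.natCast_val, ZMod.cast_id]
  have hcomp : ∀ (K : Finset (Fin n)) (l : K), Φ K u0 l = ∑ i, u0 i * ((G i (l : Fin n) : ℤ) : ZMod p) := by
    intro K l
    simp only [hΦdef, Matrix.mulVecLin_apply, Matrix.mulVec, dotProduct,
      Matrix.transpose_apply, hApdef, Matrix.of_apply]
    exact Finset.sum_congr rfl fun i _ => mul_comm _ _
  have hJ0 : ∀ l ∈ J, (p : ℤ) ∣ SZ l := by
    intro l hl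
    rw [← ZMod.intCast_zmod_eq_zero_iff_dvd, hcast l]
    have := congrFun hu0J (⟨l, hl⟩ : J)
    rw [hcomp J ⟨l, hl⟩] at this
    exact this
  have hj0nd : ¬ (p : ℤ) ∣ SZ j0 := by
    rw [← ZMod.intCast_zmod_eq_zero_iff_dvd, hcast j0]
    rw [hcomp Finset.univ j0sub] at hj0
    exact hj0
  -- build u over ZMod q
  set m := q / p with hmdef
  have hmp : m * p = q := Nat.div_mul_cancel hpq
  have hm0 : m ≠ 0 := by
    intro h
    rw [h, zero_mul] at hmp
    omega
  set u : Fin k → ZMod q := fun i => (((m : ℤ) * ((u0 i).val : ℤ) : ℤ) : ZMod q) with hudef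
  have hvec : ∀ x : Fin n, Matrix.vecMul u (Gmod G q) x = (((m : ℤ) * SZ x : ℤ) : ZMod q) := by
    intro x
    rw [Matrix.vecMul, dotProduct]
    rw [hSZdef]
    push_cast
    rw [Finset.mul_sum]
    apply Finset.sum_congr rfl
    intro i _
    rw [hudef]
    push_cast
    show ((m : ZMod q) * ((u0 i).val : ZMod q)) * ((G i x : ℤ) : ZMod q) = _
    ring
  refine ⟨u, ?_, ?_⟩
  · intro l hl
    rw [hvec l]
    obtain ⟨t, ht⟩ := hJ0 l hl
    rw [ht, ZMod.intCast_zmod_eq_zero_iff_dvd]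
    refine ⟨t, ?_⟩
    rw [← hmp]
    push_cast
    ring
  · intro h0
    have h1 := congrFun h0 j0
    rw [hvec j0] at h1
    have h2 : (((m : ℤ) * SZ j0 : ℤ) : ZMod q) = 0 := by simpa using h1
    have hdvd : (q : ℤ) ∣ (m : ℤ) * SZ j0 := by
      rwa [ZMod.intCast_zmod_eq_zero_iff_dvd] at h2
    rw [← hmp] at hdvd
    push_cast at hdvd
    have : (p : ℤ) ∣ SZ j0 := by
      rcases hdvd with ⟨t, ht⟩
      have hmne : (m : ℤ) ≠ 0 := by exact_mod_cast hm0
      refine ⟨t, mul_left_cancel₀ hmne ?_⟩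
      rw [← mul_assoc, ← ht]
    exact hj0nd this

theorem minWt_le_minWt (hG : ∀ j : Fin n, ∃ i : Fin k, G i j ≠ 0) (hn : 1 ≤ n)
    {q1 q2 : ℕ} (hq1 : 1 < q1) (hg1 : Nat.gcd q1 (lcmPeriod G) = 1)
    (hq2 : 1 < q2) (hg2 : Nat.gcd q2 (lcmPeriod G) = 1) :
    minWt G q1 ≤ minWt G q2 := by
  classical
  rw [minWt, minWt]
  apply le_iInf; intro c2
  apply le_iInf; intro hc2
  apply le_iInf; intro hc2ne
  obtain ⟨u2, hu2pre⟩ := hc2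
  have hu2 : Matrix.vecMul u2 (Gmod G q2) = c2 := hu2pre
  set J : Finset (Fin n) := Finset.univ.filter (fun j => c2 j = 0) with hJdef
  have hu2J : ∀ l ∈ J, Matrix.vecMul u2 (Gmod G q2) l = 0 := by
    intro l hl
    rw [hu2]
    exact (Finset.mem_filter.mp hl).2
  have hlt : rk G J < rk G Finset.univ := by
    have hle := rk_mono G J (Finset.subset_univ J)
    rcases lt_or_eq_of_le hle with h | h
    · exact h
    · exfalso
      have h0 := vecMul_eq_zero_of_rk_eq G J hG hn hq2 hg2 h u2 hu2J
      rw [hu2] at h0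
      exact hc2ne h0
  obtain ⟨u1, hu1J, hu1ne⟩ := exists_good_u G J hG hn hq1 hg1 hlt
  set c1 := Matrix.vecMul u1 (Gmod G q1) with hc1def
  have hmem : c1 ∈ code G q1 := ⟨u1, rfl⟩
  have hwt : hammingNorm c1 ≤ hammingNorm c2 := by
    rw [hammingNorm, hammingNorm]
    apply Finset.card_le_card
    intro j hj
    rw [Finset.mem_filter] at hj ⊢
    refine ⟨Finset.mem_univ _, fun h0 => hj.2 ?_⟩
    have hjJ : j ∈ J := by
      rw [hJdef, Finset.mem_filter]
      exact ⟨Finset.mem_univ _, h0⟩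
    exact hu1J j hjJ
  calc ⨅ (c : Fin n → ZMod q1) (_ : c ∈ code G q1) (_ : c ≠ 0), (hammingNorm c : ℕ∞)
      ≤ (hammingNorm c1 : ℕ∞) := by
        refine iInf_le_of_le c1 ?_
        rw [iInf_pos hmem, iInf_pos hu1ne]
    _ ≤ (hammingNorm c2 : ℕ∞) := by exact_mod_cast hwt


theorem stmt0 (k n : ℕ) (hk : 1 ≤ k) (hn : 1 ≤ n) (G : Matrix (Fin k) (Fin n) ℤ)
    (hG : ∀ j : Fin n, ∃ i : Fin k, G i j ≠ 0)
    (m0 : ℕ) (hm0 : IsLeast {q : ℕ | 1 < q ∧ Nat.gcd q (lcmPeriod G) = 1} m0) :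
    ∀ q : ℕ, 1 < q → Nat.gcd q (lcmPeriod G) = 1 → minWt G q = minWt G m0 := by
  intro q hq hqg
  obtain ⟨⟨hm1, hmg⟩, -⟩ := hm0
  exact le_antisymm (minWt_le_minWt G hG hn hq hqg hm1 hmg)
    (minWt_le_minWt G hG hn hm1 hmg hq hqg)

end ArrCode
end

section
/- Let m ≥ 2 be a divisor of ρ₀ such that gcd(m, e_{r(E),E}) = 1, where e_{r(E),E} is the last elementary divisor of G = G_E. Then for every q ∈ ℤ_{>0} with gcd(q, ρ₀) = m, the minimum weight satisfies d_q = d_m. -/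
open scoped BigOperators

namespace ArrCode


section Machinery
open Matrix
set_option linter.unusedSectionVars false


section MG

variable {R : Type*} [CommRing R]

/-- Expansion of the determinant of a product along functions (row version). -/
lemma det_mul_expand_rows {j : ℕ} {ι : Type*} [Fintype ι]
    (X : Matrix (Fin j) ι R) (Y : Matrix ι (Fin j) R) :
    (X * Y).det = ∑ s : Fin j → ι, (∏ l, X l (s l)) * (Y.submatrix s id).det := by
  have h : (X * Y) = Matrix.of fun l => ∑ x : ι, X l x • Y x := by
    ext l j'
    simp [Matrix.mul_apply]
  rw [h]
  have : Matrix.det (Matrix.of fun l => ∑ x : ι, X l x • Y x)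
      = (Matrix.detRowAlternating : ((Fin j) → R) [⋀^(Fin j)]→ₗ[R] R).toMultilinearMap
          (fun l => ∑ x : ι, X l x • Y x) := rfl
  rw [this, MultilinearMap.map_sum]
  refine Finset.sum_congr rfl fun s _ => ?_
  have := (Matrix.detRowAlternating :
      ((Fin j) → R) [⋀^(Fin j)]→ₗ[R] R).toMultilinearMap.map_smul_univ
      (fun l => X l (s l)) (fun l => Y (s l))
  rw [this]
  rw [smul_eq_mul]
  rfl

/-- Expansion of the determinant of a product along functions (column version). -/
lemma det_mul_expand_cols {j : ℕ} {ι : Type*} [Fintype ι]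
    (X : Matrix (Fin j) ι R) (Y : Matrix ι (Fin j) R) :
    (X * Y).det = ∑ t : Fin j → ι, (X.submatrix id t).det * ∏ l, Y (t l) l := by
  have h : (X * Y).det = ((X * Y)ᵀ).det := (Matrix.det_transpose _).symm
  rw [h, Matrix.transpose_mul, det_mul_expand_rows]
  refine Finset.sum_congr rfl fun t _ => ?_
  rw [mul_comm]
  congr 1
  rw [← Matrix.det_transpose (X.submatrix id t)]
  congr 1

end MG

section MGNat

variable {α β γ : Type*} [Fintype α] [Fintype β] [Fintype γ]

/-- gcd of all `j×j` minors (indexed by arbitrary function pairs). -/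
def mg (A : Matrix α β ℤ) (j : ℕ) : ℕ :=
  Finset.gcd Finset.univ fun p : (Fin j → α) × (Fin j → β) =>
    ((A.submatrix p.1 p.2).det).natAbs

lemma mg_dvd (A : Matrix α β ℤ) (j : ℕ) (s : Fin j → α) (t : Fin j → β) :
    (mg A j : ℤ) ∣ (A.submatrix s t).det := by
  rw [← Int.natAbs_dvd_natAbs]
  simp only [Int.natAbs_natCast]
  exact Finset.gcd_dvd (Finset.mem_univ ((s, t) : (Fin j → α) × (Fin j → β)))

lemma dvd_mg (A : Matrix α β ℤ) (j : ℕ) (d : ℕ)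
    (h : ∀ (s : Fin j → α) (t : Fin j → β), (d : ℤ) ∣ (A.submatrix s t).det) :
    d ∣ mg A j := by
  refine Finset.dvd_gcd fun p _ => ?_
  rw [← Int.natAbs_natCast d, Int.natAbs_dvd_natAbs]
  exact (Int.natAbs_dvd).mpr (h p.1 p.2)

lemma submatrix_mul_eq (X : Matrix α γ ℤ) (Y : Matrix γ β ℤ) {j : ℕ}
    (s : Fin j → α) (t : Fin j → β) :
    (X * Y).submatrix s t = X.submatrix s id * Y.submatrix id t := by
  ext l l'
  simp [Matrix.mul_apply]

lemma mg_dvd_mg_mul_left (X : Matrix α γ ℤ) (Y : Matrix γ β ℤ) (j : ℕ) :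
    mg Y j ∣ mg (X * Y) j := by
  refine dvd_mg _ _ _ fun s t => ?_
  rw [submatrix_mul_eq, det_mul_expand_rows]
  refine Finset.dvd_sum fun s' _ => dvd_mul_of_dvd_right ?_ _
  have : (Y.submatrix id t).submatrix s' id = Y.submatrix s' t := by
    rw [Matrix.submatrix_submatrix]; rfl
  rw [this]
  exact mg_dvd Y j s' t

lemma mg_dvd_mg_mul_right (X : Matrix α γ ℤ) (Y : Matrix γ β ℤ) (j : ℕ) :
    mg X j ∣ mg (X * Y) j := by
  refine dvd_mg _ _ _ fun s t => ?_
  rw [submatrix_mul_eq, det_mul_expand_cols]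
  refine Finset.dvd_sum fun t' _ => dvd_mul_of_dvd_left ?_ _
  have : (X.submatrix s id).submatrix id t' = X.submatrix s t' := by
    rw [Matrix.submatrix_submatrix]; rfl
  rw [this]
  exact mg_dvd X j s t'

end MGNat


section DTIL

variable {σ : Type*} [Fintype σ] [DecidableEq σ]

/-- The "embedded diagonal" matrix with entries `a l` at `(l, f l)`. -/
def dtil {r : ℕ} (f : Fin r → σ) (a : Fin r → ℤ) : Matrix (Fin r) σ ℤ :=
  Matrix.of fun l j => if f l = j then a l else 0

/-- selection matrix -/
def qsel {r : ℕ} (f : Fin r → σ) : Matrix (Fin r) σ ℤ :=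
  Matrix.of fun l j => if f l = j then 1 else 0

lemma dtil_eq_diag_mul {r : ℕ} (f : Fin r → σ) (a : Fin r → ℤ) :
    dtil f a = Matrix.diagonal a * qsel f := by
  ext l j
  rw [Matrix.mul_apply, Finset.sum_eq_single l]
  · simp [dtil, qsel, Matrix.diagonal_apply]
  · intro x _ hx
    simp [Matrix.diagonal_apply, Ne.symm hx, qsel]
  · intro h; exact absurd (Finset.mem_univ l) h

/-- any square "submatrix" of a diagonal matrix has determinant divisible by the full
product of the diagonal entries, when the submatrix has full size. -/
lemma prod_dvd_det_submatrix_diagonal {r : ℕ} (a : Fin r → ℤ)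
    (s t : Fin r → Fin r) :
    (∏ l, a l) ∣ ((Matrix.diagonal a).submatrix s t).det := by
  by_cases hs : Function.Injective s
  · have hsb : Function.Bijective s := Finite.injective_iff_bijective.mp hs
    set e : Fin r ≃ Fin r := Equiv.ofBijective s hsb with he
    have hse : s = ⇑e := rfl
    have h1 : (Matrix.diagonal a).submatrix s t
        = ((Matrix.diagonal a).submatrix e e).submatrix id (⇑e.symm ∘ t) := by
      ext i j'
      by_cases hc : e i = t j'
      · have hsy : e.symm (t j') = i := by rw [← hc, Equiv.symm_apply_apply]
        simp [hse, Matrix.submatrix_apply, Matrix.diagonal_apply, hc, hsy]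
      · have hsy : i ≠ e.symm (t j') := fun hcon => hc (by rw [hcon, Equiv.apply_symm_apply])
        simp [hse, Matrix.submatrix_apply, Matrix.diagonal_apply, hc, hsy]
    have h2 : (Matrix.diagonal a).submatrix e e = Matrix.diagonal (a ∘ e) := by
      ext i j
      by_cases hij : i = j
      · subst hij; simp [Matrix.diagonal_apply]
      · have : e i ≠ e j := fun hcon => hij (e.injective hcon)
        simp [Matrix.diagonal_apply, hij, this]
    rw [h1, h2]
    by_cases hu : Function.Injective (⇑e.symm ∘ t)
    · have hub : Function.Bijective (⇑e.symm ∘ t) := Finite.injective_iff_bijective.mp hu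
      set π : Equiv.Perm (Fin r) := Equiv.ofBijective _ hub with hπ
      have : (⇑e.symm ∘ t) = ⇑π := rfl
      rw [this, Matrix.det_permute' π]
      refine Dvd.dvd.mul_left ?_ _
      rw [Matrix.det_diagonal]
      exact dvd_of_eq (Equiv.prod_comp e a).symm
    · obtain ⟨l₁, l₂, h12, hne⟩ : ∃ l₁ l₂, (⇑e.symm ∘ t) l₁ = (⇑e.symm ∘ t) l₂ ∧ l₁ ≠ l₂ := by
        simp only [Function.Injective, not_forall] at hu
        obtain ⟨l₁, l₂, h12, hne⟩ := hu
        exact ⟨l₁, l₂, h12, hne⟩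
      have : ((Matrix.diagonal (a ∘ ⇑e)).submatrix id (⇑e.symm ∘ t)).det = 0 := by
        rw [← Matrix.det_transpose]
        refine Matrix.det_zero_of_row_eq hne ?_
        funext j
        show Matrix.diagonal (a ∘ ⇑e) j ((⇑e.symm ∘ t) l₁) = Matrix.diagonal (a ∘ ⇑e) j ((⇑e.symm ∘ t) l₂)
        rw [h12]
      rw [this]
      exact dvd_zero _
  · obtain ⟨l₁, l₂, h12, hne⟩ : ∃ l₁ l₂, s l₁ = s l₂ ∧ l₁ ≠ l₂ := by
      simp only [Function.Injective, not_forall] at hs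
      obtain ⟨l₁, l₂, h12, hne⟩ := hs
      exact ⟨l₁, l₂, h12, hne⟩
    have : ((Matrix.diagonal a).submatrix s t).det = 0 := by
      refine Matrix.det_zero_of_row_eq hne ?_
      funext j
      simp [h12]
    rw [this]
    exact dvd_zero _

/-- full-size minors of `dtil` are divisible by the product of all `a`. -/
lemma prod_dvd_det_submatrix_dtil {r : ℕ} (f : Fin r → σ) (a : Fin r → ℤ)
    (s : Fin r → Fin r) (t : Fin r → σ) :
    (∏ l, a l) ∣ ((dtil f a).submatrix s t).det := by
  rw [dtil_eq_diag_mul, submatrix_mul_eq, det_mul_expand_cols]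
  refine Finset.dvd_sum fun t' _ => dvd_mul_of_dvd_left ?_ _
  have : ((Matrix.diagonal a).submatrix s id).submatrix id t'
      = (Matrix.diagonal a).submatrix s t' := by
    rw [Matrix.submatrix_submatrix]; rfl
  rw [this]
  exact prod_dvd_det_submatrix_diagonal a s t'

lemma dtil_submatrix_diag {r r' : ℕ} (f : Fin r → σ) (hf : Function.Injective f)
    (a : Fin r → ℤ) (e : Fin r' → Fin r) (he : Function.Injective e) :
    (dtil f a).submatrix e (f ∘ e) = Matrix.diagonal (a ∘ e) := by
  ext i j
  by_cases hij : i = j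
  · subst hij; simp [dtil, Matrix.diagonal_apply]
  · have : f (e i) ≠ f (e j) := fun hc => hij (he (hf hc))
    simp [dtil, Matrix.diagonal_apply, hij, this]

/-- the top minor gcd of `dtil`. -/
lemma mg_dtil_top {r : ℕ} (f : Fin r → σ) (hf : Function.Injective f) (a : Fin r → ℤ) :
    mg (dtil f a) r = (∏ l, a l).natAbs := by
  refine Nat.dvd_antisymm ?_ ?_
  · have heq : ((dtil f a).submatrix id (f ∘ id)).det = ∏ l, a l := by
      rw [dtil_submatrix_diag f hf a id Function.injective_id]
      simp
    have h := mg_dvd (dtil f a) r id (f ∘ id)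
    rw [heq] at h
    simpa using Int.natAbs_dvd_natAbs.mpr h
  · refine dvd_mg _ _ _ fun s t => ?_
    exact Int.natAbs_dvd.mpr (prod_dvd_det_submatrix_dtil f a s t)

end DTIL

section SNF

variable {k : ℕ} {σ : Type*} [Fintype σ] [DecidableEq σ]

lemma exists_snf (B : Matrix (Fin k) σ ℤ) :
    ∃ (r : ℕ) (f : Fin r → σ) (a : Fin r → ℤ) (P : Matrix (Fin k) (Fin r) ℤ)
      (W : Matrix (Fin r) (Fin k) ℤ) (Mh Mh' : Matrix σ σ ℤ),
      Function.Injective f ∧ (∀ l, a l ≠ 0) ∧ Mh * Mh' = 1 ∧ Mh' * Mh = 1 ∧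
      B = P * (dtil f a * Mh) ∧ dtil f a * Mh = W * B ∧
      (∀ x : Fin r → ℤ, ∃ u : Fin k → ℤ, u ᵥ* P = x) := by
  classical
  set N : Submodule ℤ (σ → ℤ) := LinearMap.range (Matrix.vecMulLinear B) with hNdef
  obtain ⟨r, snf⟩ := N.smithNormalForm (Pi.basisFun ℤ σ)
  obtain ⟨bM, bN, femb, a, hsnf⟩ := snf
  set f : Fin r → σ := ⇑femb with hfdef
  have hf : Function.Injective f := femb.injective
  have ha : ∀ l, a l ≠ 0 := by
    intro l hl
    have h0 : (bN l : σ → ℤ) = 0 := by rw [hsnf l, hl, zero_smul]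
    exact bN.ne_zero l (Subtype.ext h0)
  -- the matrices
  set Mh : Matrix σ σ ℤ := ((Pi.basisFun ℤ σ).toMatrix ⇑bM)ᵀ with hMh
  set Mh' : Matrix σ σ ℤ := (bM.toMatrix ⇑(Pi.basisFun ℤ σ))ᵀ with hMh'
  have hMM' : Mh * Mh' = 1 := by
    rw [hMh, hMh', ← Matrix.transpose_mul, Module.Basis.toMatrix_mul_toMatrix_flip,
      Matrix.transpose_one]
  have hM'M : Mh' * Mh = 1 := by
    rw [hMh, hMh', ← Matrix.transpose_mul, Module.Basis.toMatrix_mul_toMatrix_flip,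
      Matrix.transpose_one]
  have hMh_apply : ∀ j' j, Mh j' j = bM j' j := by
    intro j' j
    simp [hMh, Matrix.transpose_apply, Module.Basis.toMatrix, Pi.basisFun_repr]
  -- C = dtil * Mh has rows bN
  have hC : ∀ l j, (dtil f a * Mh) l j = (bN l : σ → ℤ) j := by
    intro l j
    rw [Matrix.mul_apply, Finset.sum_eq_single (f l)]
    · rw [hMh_apply]
      have : (bN l : σ → ℤ) j = (a l • bM (f l)) j := by rw [hsnf l]
      rw [this]
      simp [dtil]
    · intro j' _ hj'
      simp [dtil, Ne.symm hj']
    · intro h; exact absurd (Finset.mem_univ (f l)) h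
  -- rows of B are in N
  have hrowB : ∀ i : Fin k, (Pi.single i (1:ℤ)) ᵥ* B = B i := by
    intro i; funext j
    simp only [Matrix.vecMul, dotProduct, Pi.single_apply]
    rw [Finset.sum_eq_single i]
    · simp
    · intro b _ hb; simp [hb]
    · intro h; exact absurd (Finset.mem_univ i) h
  have hrow : ∀ i : Fin k, B i ∈ N := by
    intro i
    exact ⟨Pi.single i (1:ℤ), by rw [Matrix.vecMulLinear_apply, hrowB]⟩
  have memU : ∀ u : Fin k → ℤ, u ᵥ* B ∈ N := fun u => ⟨u, Matrix.vecMulLinear_apply _ _⟩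
  set P : Matrix (Fin k) (Fin r) ℤ :=
    Matrix.of fun i l => (bN.repr ⟨B i, hrow i⟩) l with hPdef
  -- key linearity
  have sumN : ∀ u : Fin k → ℤ,
      (∑ i, u i • (⟨B i, hrow i⟩ : N)) = (⟨u ᵥ* B, memU u⟩ : N) := by
    intro u
    apply Subtype.ext
    rw [AddSubmonoidClass.coe_finset_sum]
    funext j
    simp only [Finset.sum_apply, Submodule.coe_smul, Pi.smul_apply, smul_eq_mul]
    simp [Matrix.vecMul, dotProduct]
  have PK : ∀ u : Fin k → ℤ, u ᵥ* P = ⇑(bN.repr ⟨u ᵥ* B, memU u⟩) := by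
    intro u
    funext l
    have h1 : (u ᵥ* P) l = ∑ i, u i * (bN.repr ⟨B i, hrow i⟩) l := by
      simp [Matrix.vecMul, dotProduct, hPdef]
    rw [h1, ← sumN u]
    set lmap : N →ₗ[ℤ] ℤ := (Finsupp.lapply l).comp bN.repr.toLinearMap with hlm
    have h2 : ∀ v : N, (bN.repr v) l = lmap v := fun v => rfl
    rw [h2, map_sum]
    refine Finset.sum_congr rfl fun i _ => ?_
    rw [lmap.map_smul, smul_eq_mul, h2]
  -- B = P * C
  have hB : B = P * (dtil f a * Mh) := by
    ext i j
    have h1 : (P * (dtil f a * Mh)) i j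
        = ∑ l, (bN.repr ⟨B i, hrow i⟩) l * (bN l : σ → ℤ) j := by
      rw [Matrix.mul_apply]
      exact Finset.sum_congr rfl fun l _ => by rw [hC, hPdef]; rfl
    have h2 : (∑ l, (bN.repr ⟨B i, hrow i⟩) l * (bN l : σ → ℤ) j)
        = ((∑ l, (bN.repr ⟨B i, hrow i⟩) l • bN l : N) : σ → ℤ) j := by
      rw [AddSubmonoidClass.coe_finset_sum]
      simp [Finset.sum_apply]
    rw [h1, h2, bN.sum_repr ⟨B i, hrow i⟩]
  -- C = W * B
  have hWex : ∀ l : Fin r, ∃ w : Fin k → ℤ, w ᵥ* B = (bN l : σ → ℤ) := by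
    intro l
    obtain ⟨w, hw⟩ := (bN l).2
    exact ⟨w, by rw [← Matrix.vecMulLinear_apply]; exact hw⟩
  choose w hw using hWex
  have hWB : dtil f a * Mh = Matrix.of w * B := by
    ext l j
    rw [hC]
    have : (Matrix.of w * B) l j = (w l ᵥ* B) j := by
      simp [Matrix.mul_apply, Matrix.vecMul, dotProduct]
    rw [this, hw l]
  -- surjectivity
  have hsurj : ∀ x : Fin r → ℤ, ∃ u : Fin k → ℤ, u ᵥ* P = x := by
    intro x
    have hy : (((∑ l, x l • bN l : N)) : σ → ℤ) ∈ N := (∑ l, x l • bN l : N).2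
    obtain ⟨u, hu⟩ := hy
    refine ⟨u, ?_⟩
    have : (⟨u ᵥ* B, memU u⟩ : N) = ∑ l, x l • bN l := by
      apply Subtype.ext
      rw [Matrix.vecMulLinear_apply] at hu
      exact hu
    rw [PK u, this, bN.repr_sum_self]
  exact ⟨r, f, a, P, Matrix.of w, Mh, Mh', hf, ha, hMM', hM'M, hB, hWB, hsurj⟩

end SNF

section CARD

lemma card_ker_mul_card_range {A B : Type*} [AddGroup A] [AddCommGroup B] (g : A →+ B) :
    Nat.card A = Nat.card g.ker * Nat.card g.range := by
  rw [AddSubgroup.card_eq_card_quotient_mul_card_addSubgroup g.ker,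
    Nat.card_congr (QuotientAddGroup.quotientKerEquivRange g).toEquiv, mul_comm]

lemma card_mulker (q : ℕ) (hq : 0 < q) (c : ℤ) :
    Nat.card {x : ZMod q // x * ((c : ℤ) : ZMod q) = 0} = Nat.gcd q c.natAbs := by
  haveI : NeZero q := ⟨hq.ne'⟩
  set cz : ZMod q := ((c : ℤ) : ZMod q) with hcz
  set g : ZMod q →+ ZMod q := AddMonoidHom.mulRight cz with hg
  have h1 := card_ker_mul_card_range g
  have hZq : Nat.card (ZMod q) = q := Nat.card_zmod q
  have hrange : (g.range : Set (ZMod q)) = (AddSubgroup.zmultiples cz : Set (ZMod q)) := by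
    ext y
    constructor
    · rintro ⟨x, rfl⟩
      refine ⟨(x.val : ℤ), ?_⟩
      show ((x.val : ℤ) • cz) = g x
      rw [zsmul_eq_mul]
      have hx : ((x.val : ℤ) : ZMod q) = x := by
        rw [Int.cast_natCast]
        exact ZMod.natCast_rightInverse x
      rw [hx]
      rfl
    · rintro ⟨z, rfl⟩
      refine ⟨((z : ℤ) : ZMod q), ?_⟩
      show g ((z : ℤ) : ZMod q) = z • cz
      rw [zsmul_eq_mul]
      rfl
  have hOrd : addOrderOf cz = q / Nat.gcd q c.natAbs := by
    rcases Int.natAbs_eq c with hc | hc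
    · have hcz2 : cz = ((c.natAbs : ℕ) : ZMod q) := by
        rw [hcz]; conv_lhs => rw [hc]
        rw [Int.cast_natCast]
      rw [hcz2, ZMod.addOrderOf_coe _ hq.ne']
    · have hcz2 : cz = -((c.natAbs : ℕ) : ZMod q) := by
        rw [hcz]; conv_lhs => rw [hc]
        rw [Int.cast_neg, Int.cast_natCast]
      rw [hcz2, addOrderOf_neg, ZMod.addOrderOf_coe _ hq.ne']
  have hcard_range : Nat.card g.range = q / Nat.gcd q c.natAbs := by
    have e : Nat.card g.range = Nat.card (AddSubgroup.zmultiples cz) := by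
      exact Nat.card_congr (Equiv.setCongr hrange)
    rw [e, Nat.card_zmultiples, hOrd]
  have hgcd_dvd : Nat.gcd q c.natAbs ∣ q := Nat.gcd_dvd_left _ _
  have hqd_pos : 0 < q / Nat.gcd q c.natAbs := by
    apply Nat.div_pos (Nat.le_of_dvd hq hgcd_dvd) (Nat.gcd_pos_of_pos_left _ hq)
  have hker_card : Nat.card g.ker = Nat.gcd q c.natAbs := by
    have h2 : Nat.card g.ker * (q / Nat.gcd q c.natAbs) = q := by
      rw [← hcard_range, ← h1, hZq]
    have h3 : Nat.gcd q c.natAbs * (q / Nat.gcd q c.natAbs) = q :=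
      Nat.mul_div_cancel' hgcd_dvd
    exact Nat.eq_of_mul_eq_mul_right hqd_pos (by rw [h2, h3])
  rw [← hker_card]
  apply Nat.card_congr
  apply Equiv.subtypeEquivRight
  intro x
  simp [hg, AddMonoidHom.mem_ker]

lemma card_kerdiag (q : ℕ) (hq : 0 < q) {r : ℕ} (d : Fin r → ℤ) :
    Nat.card {y : Fin r → ZMod q // ∀ l, y l * ((d l : ℤ) : ZMod q) = 0}
      = ∏ l, Nat.gcd q (d l).natAbs := by
  have e : {y : Fin r → ZMod q // ∀ l, y l * ((d l : ℤ) : ZMod q) = 0}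
      ≃ (∀ l : Fin r, {x : ZMod q // x * ((d l : ℤ) : ZMod q) = 0}) :=
    { toFun := fun y l => ⟨y.1 l, y.2 l⟩
      invFun := fun z => ⟨fun l => (z l).1, fun l => (z l).2⟩
      left_inv := fun y => rfl
      right_inv := fun z => rfl }
  rw [Nat.card_congr e, Nat.card_pi]
  exact Finset.prod_congr rfl fun l _ => card_mulker q hq (d l)

end CARD

section MASTER

variable {k : ℕ} {σ : Type*} [Fintype σ] [DecidableEq σ]

lemma master (B : Matrix (Fin k) σ ℤ) :
    ∃ (r : ℕ) (aN : Fin r → ℕ),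
      (∀ l, aN l ≠ 0) ∧
      Matrix.rank (B.map (fun z : ℤ => (z : ℚ))) = r ∧
      (∀ l : Fin r, aN l ∣ mg B r / mg B (r - 1)) ∧
      (∀ q : ℕ, 0 < q →
        Nat.card {u : Fin k → ZMod q // u ᵥ* (B.map (fun z : ℤ => (z : ZMod q))) = 0} * q ^ r
          = q ^ k * ∏ l, Nat.gcd q (aN l)) := by
  obtain ⟨r, f, a, P, W, Mh, Mh', hf, ha, hMM', hM'M, hB, hWB, hsurj⟩ := exists_snf B
  refine ⟨r, fun l => (a l).natAbs, fun l => by simpa using ha l, ?_, ?_, ?_⟩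
  · -- rank
    set ρ := Int.castRingHom ℚ with hρ
    have hcast : (fun z : ℤ => (z : ℚ)) = ⇑ρ := rfl
    rw [hcast]
    have e1 : B.map ⇑ρ = P.map ⇑ρ * ((dtil f a).map ⇑ρ * Mh.map ⇑ρ) := by
      rw [hB, Matrix.map_mul, Matrix.map_mul]
    have e2 : (dtil f a).map ⇑ρ * Mh.map ⇑ρ = W.map ⇑ρ * B.map ⇑ρ := by
      rw [← Matrix.map_mul, hWB, Matrix.map_mul]
    have e3 : Mh.map ⇑ρ * Mh'.map ⇑ρ = 1 := by
      rw [← Matrix.map_mul, hMM', Matrix.map_one] <;> simp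
    have le1 : (B.map ⇑ρ).rank ≤ ((dtil f a).map ⇑ρ * Mh.map ⇑ρ).rank := by
      rw [e1]; exact Matrix.rank_mul_le_right _ _
    have le2 : ((dtil f a).map ⇑ρ * Mh.map ⇑ρ).rank ≤ (B.map ⇑ρ).rank := by
      rw [e2]; exact Matrix.rank_mul_le_right _ _
    have le3 : ((dtil f a).map ⇑ρ * Mh.map ⇑ρ).rank ≤ ((dtil f a).map ⇑ρ).rank :=
      Matrix.rank_mul_le_left _ _
    have e4 : (dtil f a).map ⇑ρ = ((dtil f a).map ⇑ρ * Mh.map ⇑ρ) * Mh'.map ⇑ρ := by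
      rw [Matrix.mul_assoc, e3, Matrix.mul_one]
    have le4 : ((dtil f a).map ⇑ρ).rank ≤ ((dtil f a).map ⇑ρ * Mh.map ⇑ρ).rank := by
      conv_lhs => rw [e4]
      exact Matrix.rank_mul_le_left _ _
    -- rank of dtil over ℚ is r
    set S : Matrix σ (Fin r) ℚ :=
      Matrix.of fun j l => if f l = j then (a l : ℚ)⁻¹ else 0 with hS
    have hDS : (dtil f a).map ⇑ρ * S = 1 := by
      ext l l'
      rw [Matrix.mul_apply, Finset.sum_eq_single (f l)]
      · by_cases hll : l = l'
        · subst hll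
          simp [dtil, hS, Matrix.one_apply, Int.cast_ne_zero, ha l, hρ]
        · have : f l' ≠ f l := fun hc => hll (hf hc).symm
          simp [dtil, hS, Matrix.one_apply, hll, this, hρ]
      · intro j _ hj
        simp [dtil, Ne.symm hj, hρ]
      · intro h; exact absurd (Finset.mem_univ (f l)) h
    have hrd_le : ((dtil f a).map ⇑ρ).rank ≤ r := by
      simpa using Matrix.rank_le_card_height ((dtil f a).map ⇑ρ)
    have hrd_ge : r ≤ ((dtil f a).map ⇑ρ).rank := by
      have h1 : ((dtil f a).map ⇑ρ * S).rank ≤ ((dtil f a).map ⇑ρ).rank :=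
        Matrix.rank_mul_le_left _ _
      rw [hDS] at h1
      simpa using h1
    omega
  · -- divisibility of elementary divisor
    intro l
    have hmgB : ∀ j, mg B j = mg (dtil f a) j := by
      intro j
      apply Nat.dvd_antisymm
      · have h1 : mg B j ∣ mg (W * B) j := mg_dvd_mg_mul_left W B j
        have h2 : mg (W * B) j ∣ mg ((W * B) * Mh') j := mg_dvd_mg_mul_right _ _ _
        have e : (W * B) * Mh' = dtil f a := by
          rw [← hWB, Matrix.mul_assoc, hMM', Matrix.mul_one]
        rw [e] at h2; exact h1.trans h2
      · have h1 : mg (dtil f a) j ∣ mg (dtil f a * Mh) j := mg_dvd_mg_mul_right _ _ _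
        have h2 : mg (dtil f a * Mh) j ∣ mg (P * (dtil f a * Mh)) j := mg_dvd_mg_mul_left _ _ _
        rw [← hB] at h2; exact h1.trans h2
    rcases r with _ | r'
    · exact l.elim0
    have htop : mg B (r' + 1) = (∏ i, a i).natAbs := by
      rw [hmgB, mg_dtil_top f hf a]
    set cl : ℕ := (∏ i : Fin r', a (l.succAbove i)).natAbs with hcl
    have hsub : (dtil f a).submatrix l.succAbove (f ∘ l.succAbove)
        = Matrix.diagonal (a ∘ l.succAbove) :=
      dtil_submatrix_diag f hf a l.succAbove (Fin.succAbove_right_injective)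
    have hcl_minor : mg B r' ∣ cl := by
      rw [hmgB]
      have h := mg_dvd (dtil f a) r' l.succAbove (f ∘ l.succAbove)
      rw [hsub, Matrix.det_diagonal] at h
      have := Int.natAbs_dvd_natAbs.mpr h
      simpa [hcl] using this
    have hsplit : (∏ i : Fin (r' + 1), a i).natAbs = (a l).natAbs * cl := by
      rw [Fin.prod_univ_succAbove a l, Int.natAbs_mul]
    have hcl_dvd_top : cl ∣ mg B (r' + 1) := by
      rw [htop, hsplit]; exact dvd_mul_left _ _
    have hlow_dvd_top : mg B r' ∣ mg B (r' + 1) := hcl_minor.trans hcl_dvd_top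
    have hgoal : mg B r' * (a l).natAbs ∣ mg B (r' + 1) := by
      rw [htop, hsplit, mul_comm ((a l).natAbs) cl]
      exact mul_dvd_mul_right hcl_minor _
    have h := (Nat.dvd_div_iff_mul_dvd hlow_dvd_top).mpr hgoal
    simpa using h
  · -- counting
    intro q hq
    haveI : NeZero q := ⟨hq.ne'⟩
    set ρ := Int.castRingHom (ZMod q) with hρ
    have hcast : (fun z : ℤ => (z : ZMod q)) = ⇑ρ := rfl
    rw [hcast]
    set Pz := P.map ⇑ρ with hPz
    set Dz := (dtil f a).map ⇑ρ with hDz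
    set Mhz := Mh.map ⇑ρ with hMhz
    set Mh'z := Mh'.map ⇑ρ with hMh'z
    set dz : Fin r → ZMod q := fun l => ((a l : ℤ) : ZMod q) with hdz
    have hBz : B.map ⇑ρ = Pz * (Dz * Mhz) := by
      rw [hB, Matrix.map_mul, Matrix.map_mul]
    have hmap1 : Mhz * Mh'z = 1 := by
      rw [hMhz, hMh'z, ← Matrix.map_mul, hMM', Matrix.map_one] <;> simp
    have step1 : ∀ x : σ → ZMod q, x ᵥ* Mhz = 0 ↔ x = 0 := by
      intro x
      constructor
      · intro h
        have : (x ᵥ* Mhz) ᵥ* Mh'z = x := by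
          rw [Matrix.vecMul_vecMul, hmap1, Matrix.vecMul_one]
        rw [h, Matrix.zero_vecMul] at this
        exact this.symm
      · intro h; rw [h, Matrix.zero_vecMul]
    have step2 : ∀ y : Fin r → ZMod q, y ᵥ* Dz = 0 ↔ ∀ l, y l * dz l = 0 := by
      intro y
      constructor
      · intro h l
        have hl := congrFun h (f l)
        rw [Matrix.vecMul, dotProduct] at hl
        rw [Finset.sum_eq_single l] at hl
        · simpa [hDz, dtil, hdz, hρ] using hl
        · intro l' _ hl'
          have : f l' ≠ f l := fun hc => hl' (hf hc)
          simp [hDz, dtil, this, hρ]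
        · intro h'; exact absurd (Finset.mem_univ l) h'
      · intro h
        funext j
        rw [Matrix.vecMul, dotProduct]
        rw [show (0 : σ → ZMod q) j = 0 from rfl]
        apply Finset.sum_eq_zero
        intro l _
        by_cases hfl : f l = j
        · have : Dz l j = dz l := by simp [hDz, dtil, hfl, hdz, hρ]
          rw [this, h l]
        · have : Dz l j = 0 := by simp [hDz, dtil, hfl, hρ]
          rw [this, mul_zero]
    have hker_iff : ∀ u : Fin k → ZMod q,
        u ᵥ* B.map ⇑ρ = 0 ↔ ∀ l, (u ᵥ* Pz) l * dz l = 0 := by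
      intro u
      rw [hBz, ← Matrix.vecMul_vecMul, ← Matrix.vecMul_vecMul, step1, step2]
    -- the two additive homs
    set θ : (Fin k → ZMod q) →+ (Fin r → ZMod q) :=
      (Matrix.vecMulLinear ((P * Matrix.diagonal a).map ⇑ρ)).toAddMonoidHom with hθdef
    set δ : (Fin r → ZMod q) →+ (Fin r → ZMod q) :=
      (Matrix.vecMulLinear (Matrix.diagonal dz)).toAddMonoidHom with hδdef
    have hPD : (P * Matrix.diagonal a).map ⇑ρ = Pz * Matrix.diagonal dz := by
      rw [Matrix.map_mul]
      congr 1
      rw [Matrix.diagonal_map (by simp [hρ])]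
      rfl
    have hθ : ∀ u, θ u = (u ᵥ* Pz) ᵥ* Matrix.diagonal dz := by
      intro u
      rw [hθdef]
      show (Matrix.vecMulLinear ((P * Matrix.diagonal a).map ⇑ρ)) u = _
      rw [Matrix.vecMulLinear_apply, hPD, ← Matrix.vecMul_vecMul]
    have hδ : ∀ y, δ y = y ᵥ* Matrix.diagonal dz := by
      intro y
      rw [hδdef]
      show (Matrix.vecMulLinear (Matrix.diagonal dz)) y = _
      rw [Matrix.vecMulLinear_apply]
    have hθker : ∀ u : Fin k → ZMod q, u ∈ θ.ker ↔ u ᵥ* B.map ⇑ρ = 0 := by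
      intro u
      rw [AddMonoidHom.mem_ker, hθ u, hker_iff]
      constructor
      · intro h l
        have := congrFun h l
        rwa [Matrix.vecMul_diagonal] at this
      · intro h
        funext l
        rw [Matrix.vecMul_diagonal]
        exact h l
    have hsurjz : ∀ y : Fin r → ZMod q, ∃ u, u ᵥ* Pz = y := by
      intro y
      obtain ⟨u₀, hu₀⟩ := hsurj (fun l => ((y l).val : ℤ))
      refine ⟨fun i => ((u₀ i : ℤ) : ZMod q), ?_⟩
      funext l
      have hmv := RingHom.map_vecMul ρ P u₀ l
      show ((⇑ρ ∘ u₀) ᵥ* Pz) l = y l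
      rw [hPz, ← hmv, hu₀]
      show ((((y l).val : ℤ) : ZMod q)) = y l
      rw [Int.cast_natCast]
      exact ZMod.natCast_rightInverse (y l)
    have hrange_eq : θ.range = δ.range := by
      ext z
      constructor
      · rintro ⟨u, rfl⟩
        exact ⟨u ᵥ* Pz, by rw [hδ, hθ]⟩
      · rintro ⟨y, rfl⟩
        obtain ⟨u, hu⟩ := hsurjz y
        exact ⟨u, by rw [hθ, hu, hδ]⟩
    have hkerδ : Nat.card δ.ker = ∏ l, Nat.gcd q (a l).natAbs := by
      rw [← card_kerdiag q hq a]
      apply Nat.card_congr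
      apply Equiv.subtypeEquivRight
      intro y
      rw [AddMonoidHom.mem_ker, hδ y]
      constructor
      · intro h l
        have := congrFun h l
        rwa [Matrix.vecMul_diagonal] at this
      · intro h
        funext l
        rw [Matrix.vecMul_diagonal]
        exact h l
    have hcard_dom_k : Nat.card (Fin k → ZMod q) = q ^ k := by
      rw [Nat.card_pi]
      simp [Nat.card_zmod]
    have hcard_dom_r : Nat.card (Fin r → ZMod q) = q ^ r := by
      rw [Nat.card_pi]
      simp [Nat.card_zmod]
    have h1 := card_ker_mul_card_range θ
    have h2 := card_ker_mul_card_range δ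
    rw [hcard_dom_k] at h1
    rw [hcard_dom_r] at h2
    have h3 : Nat.card θ.range = Nat.card δ.range := by rw [hrange_eq]
    have hH : Nat.card {u : Fin k → ZMod q // u ᵥ* B.map ⇑ρ = 0} = Nat.card θ.ker := by
      apply Nat.card_congr
      exact Equiv.subtypeEquivRight fun u => (hθker u).symm
    rw [hH, h2]
    calc Nat.card θ.ker * (Nat.card δ.ker * Nat.card δ.range)
        = (Nat.card θ.ker * Nat.card θ.range) * Nat.card δ.ker := by
          rw [h3]; ring
      _ = q ^ k * Nat.card δ.ker := by rw [← h1]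
      _ = q ^ k * ∏ l, Nat.gcd q (a l).natAbs := by rw [hkerδ]

end MASTER

end Machinery

section GLUE

open Matrix

variable {k n : ℕ}

lemma vecMul_apply {N : ℕ} {α : Type*} [Fintype α] (u : Fin k → ZMod N)
    (M : Matrix (Fin k) α (ZMod N)) (j : α) : (u ᵥ* M) j = ∑ i, u i * M i j := rfl

/-- The column submatrix of `G` indexed by the subtype of `J`. -/
def subCols (G : Matrix (Fin k) (Fin n) ℤ) (J : Finset (Fin n)) : Matrix (Fin k) ↥J ℤ :=
  Matrix.of fun i j => G i j.1

lemma minorGcd_eq_mg (G : Matrix (Fin k) (Fin n) ℤ) (J : Finset (Fin n)) (j : ℕ) :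
    minorGcd G J j = mg (subCols G J) j := rfl

lemma rk_eq_rank_s1 (G : Matrix (Fin k) (Fin n) ℤ) (J : Finset (Fin n)) :
    rk G J = Matrix.rank ((subCols G J).map (fun z : ℤ => (z : ℚ))) := rfl

lemma mem_HJ_iff (G : Matrix (Fin k) (Fin n) ℤ) (J : Finset (Fin n)) (q : ℕ)
    (u : Fin k → ZMod q) :
    u ∈ HJ G J q ↔ u ᵥ* ((subCols G J).map (fun z : ℤ => (z : ZMod q))) = 0 := by
  constructor
  · intro h
    funext j
    exact h j.1 j.2
  · intro h j hj
    exact congrFun h ⟨j, hj⟩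

lemma mem_HJ_univ_iff (G : Matrix (Fin k) (Fin n) ℤ) (q : ℕ) (u : Fin k → ZMod q) :
    u ∈ HJ G Finset.univ q ↔ Matrix.vecMul u (Gmod G q) = 0 := by
  constructor
  · intro h
    funext j
    exact h j (Finset.mem_univ j)
  · intro h j _
    exact congrFun h j

lemma HJ_univ_subset (G : Matrix (Fin k) (Fin n) ℤ) (J : Finset (Fin n)) (q : ℕ) :
    HJ G Finset.univ q ⊆ HJ G J q := fun u hu j _ => hu j (Finset.mem_univ j)

lemma perJ (G : Matrix (Fin k) (Fin n) ℤ) (J : Finset (Fin n)) :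
    ∃ (r : ℕ) (aN : Fin r → ℕ),
      r = rk G J ∧ r ≤ k ∧ (∀ l, aN l ≠ 0) ∧
      (∀ l, aN l ∣ elemDiv G J (rk G J)) ∧
      (∀ q : ℕ, 0 < q →
        Nat.card ↥(HJ G J q) * q ^ r = q ^ k * ∏ l, Nat.gcd q (aN l)) := by
  obtain ⟨r, aN, hne, hrank, hdvd, hcount⟩ := master (subCols G J)
  have hr : r = rk G J := by rw [rk_eq_rank_s1]; exact hrank.symm
  refine ⟨r, aN, hr, ?_, hne, ?_, ?_⟩
  · rw [← hrank]
    simpa using Matrix.rank_le_card_height ((subCols G J).map (fun z : ℤ => (z : ℚ)))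
  · intro l
    have h := hdvd l
    rw [elemDiv, minorGcd_eq_mg, minorGcd_eq_mg, ← hr]
    exact h
  · intro q hq
    have h := hcount q hq
    have hcc : Nat.card ↥(HJ G J q)
        = Nat.card {u : Fin k → ZMod q //
            u ᵥ* ((subCols G J).map (fun z : ℤ => (z : ZMod q))) = 0} :=
      Nat.card_congr (Equiv.subtypeEquivRight fun u => mem_HJ_iff G J q u)
    rw [hcc]
    exact h

lemma rk_le_rk_univ (G : Matrix (Fin k) (Fin n) ℤ) (J : Finset (Fin n)) :
    rk G J ≤ rk G Finset.univ := by
  rw [rk_eq_rank_s1, rk_eq_rank_s1]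
  have hfac : (subCols G J).map (fun z : ℤ => (z : ℚ))
      = ((subCols G Finset.univ).map (fun z : ℤ => (z : ℚ))) *
        (Matrix.of fun (j' : ↥(Finset.univ : Finset (Fin n))) (j : ↥J) =>
          if j'.1 = j.1 then (1 : ℚ) else 0) := by
    ext i j
    rw [Matrix.mul_apply,
      Finset.sum_eq_single (⟨j.1, Finset.mem_univ _⟩ : ↥(Finset.univ : Finset (Fin n)))]
    · simp [subCols]
    · intro b _ hb
      have hb1 : b.1 ≠ j.1 := fun hc => hb (Subtype.ext hc)
      simp [hb1]
    · intro h; exact absurd (Finset.mem_univ _) h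
  rw [hfac]
  exact Matrix.rank_mul_le_left _ _

lemma minorGcd_empty_zero (G : Matrix (Fin k) (Fin n) ℤ) (J : Finset (Fin n)) :
    minorGcd G J 0 = 1 := by
  apply Nat.dvd_antisymm _ (one_dvd _)
  have hmem : ((Fin.elim0, Fin.elim0) : (Fin 0 → Fin k) × (Fin 0 → ↥J)) ∈
      (Finset.univ : Finset ((Fin 0 → Fin k) × (Fin 0 → ↥J))) := Finset.mem_univ _
  have h := Finset.gcd_dvd (f := fun p : (Fin 0 → Fin k) × (Fin 0 → ↥J) =>
    ((G.submatrix p.1 fun l => (p.2 l : Fin n)).det).natAbs) hmem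
  simp only [Matrix.det_fin_zero, Int.natAbs_one] at h
  exact h

lemma rk_empty_s1 (G : Matrix (Fin k) (Fin n) ℤ) : rk G ∅ = 0 := by
  rw [rk_eq_rank_s1]
  have h := Matrix.rank_le_card_width ((subCols G ∅).map (fun z : ℤ => (z : ℚ)))
  simpa using h

lemma elemDiv_empty (G : Matrix (Fin k) (Fin n) ℤ) : elemDiv G ∅ (rk G ∅) = 1 := by
  rw [rk_empty_s1, elemDiv]
  norm_num
  rw [minorGcd_empty_zero]

end GLUE


section FINAL

open Matrix

variable {k n : ℕ}

lemma transfer (G : Matrix (Fin k) (Fin n) ℤ) (hn : 1 ≤ n)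
    (m : ℕ) (hm2 : 2 ≤ m)
    (hcop : Nat.gcd m (elemDiv G Finset.univ (rk G Finset.univ)) = 1)
    (q : ℕ) (hq0 : 0 < q) (hgcd : Nat.gcd q (lcmPeriod G) = m)
    (J : Finset (Fin n))
    (h : ∃ u : Fin k → ZMod q, u ∈ HJ G J q ∧ Matrix.vecMul u (Gmod G q) ≠ 0) :
    ∃ v : Fin k → ZMod m, v ∈ HJ G J m ∧ Matrix.vecMul v (Gmod G m) ≠ 0 := by
  have hmq : m ∣ q := by rw [← hgcd]; exact Nat.gcd_dvd_left _ _
  have hm0 : 0 < m := by omega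
  have hq2 : 2 ≤ q := le_trans hm2 (Nat.le_of_dvd hq0 hmq)
  haveI : NeZero q := ⟨hq0.ne'⟩
  haveI : NeZero m := ⟨hm0.ne'⟩
  haveI : Nonempty (Fin n) := ⟨⟨0, hn⟩⟩
  have hswap : ∀ x : ℕ, x ∣ lcmPeriod G → Nat.gcd q x = Nat.gcd m x := by
    intro x hx
    apply Nat.dvd_antisymm
    · refine Nat.dvd_gcd ?_ (Nat.gcd_dvd_right q x)
      rw [← hgcd]
      exact Nat.dvd_gcd (Nat.gcd_dvd_left q x) ((Nat.gcd_dvd_right q x).trans hx)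
    · exact Nat.dvd_gcd ((Nat.gcd_dvd_left m x).trans hmq) (Nat.gcd_dvd_right m x)
  obtain ⟨rJ, aJ, hrJ, hrJk, haJne, haJdvd, hcountJ⟩ := perJ G J
  obtain ⟨rE, aE, hrE, hrEk, haEne, haEdvd, hcountE⟩ := perJ G Finset.univ
  have hrr : rJ ≤ rE := by rw [hrJ, hrE]; exact rk_le_rk_univ G J
  have huniv_mem : (Finset.univ : Finset (Fin n)) ∈
      (Finset.univ : Finset (Fin n)).powerset.filter (fun K => K ≠ ∅) := by
    rw [Finset.mem_filter]
    exact ⟨Finset.mem_powerset_self _, Finset.univ_nonempty.ne_empty⟩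
  have hEdvdρ : elemDiv G Finset.univ (rk G Finset.univ) ∣ lcmPeriod G :=
    Finset.dvd_lcm huniv_mem
  have hgEm : ∀ l, Nat.gcd m (aE l) = 1 := by
    intro l
    have h1 : Nat.gcd m (aE l) ∣ Nat.gcd m (elemDiv G Finset.univ (rk G Finset.univ)) :=
      Nat.dvd_gcd (Nat.gcd_dvd_left _ _) ((Nat.gcd_dvd_right _ _).trans (haEdvd l))
    rw [hcop] at h1
    exact Nat.dvd_one.mp h1
  have hgEq : ∀ l, Nat.gcd q (aE l) = 1 := by
    intro l
    rw [hswap _ ((haEdvd l).trans hEdvdρ)]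
    exact hgEm l
  have hcardEq : Nat.card ↥(HJ G Finset.univ q) * q ^ rE = q ^ k := by
    have hh := hcountE q hq0
    rwa [Finset.prod_congr rfl (fun l _ => hgEq l), Finset.prod_const_one, mul_one] at hh
  have hcardEm : Nat.card ↥(HJ G Finset.univ m) * m ^ rE = m ^ k := by
    have hh := hcountE m hm0
    rwa [Finset.prod_congr rfl (fun l _ => hgEm l), Finset.prod_const_one, mul_one] at hh
  have hswapJ : ∀ l, Nat.gcd q (aJ l) = Nat.gcd m (aJ l) := by
    intro l
    by_cases hJ : J = ∅
    · have h1 : aJ l ∣ 1 := by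
        have hh := haJdvd l
        rwa [hJ, elemDiv_empty] at hh
      rw [Nat.dvd_one.mp h1]
      simp
    · have hJmem : J ∈ (Finset.univ : Finset (Fin n)).powerset.filter (fun K => K ≠ ∅) := by
        rw [Finset.mem_filter]
        exact ⟨Finset.mem_powerset.mpr (Finset.subset_univ J), hJ⟩
      exact hswap _ ((haJdvd l).trans (Finset.dvd_lcm hJmem))
  set PJ := ∏ l, Nat.gcd m (aJ l) with hPJ
  have hPJpos : 0 < PJ := Finset.prod_pos fun l _ => Nat.gcd_pos_of_pos_left _ hm0
  have hcardJq : Nat.card ↥(HJ G J q) * q ^ rJ = q ^ k * PJ := by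
    have hh := hcountJ q hq0
    rwa [Finset.prod_congr rfl fun l _ => hswapJ l] at hh
  have hcardJm : Nat.card ↥(HJ G J m) * m ^ rJ = m ^ k * PJ := hcountJ m hm0
  obtain ⟨u, huJ, hune⟩ := h
  have hlt_q : Nat.card ↥(HJ G Finset.univ q) < Nat.card ↥(HJ G J q) := by
    rw [Nat.card_coe_set_eq, Nat.card_coe_set_eq]
    apply Set.ncard_lt_ncard
    · rw [Set.ssubset_iff_of_subset (HJ_univ_subset G J q)]
      exact ⟨u, huJ, fun hmem => hune ((mem_HJ_univ_iff G q u).mp hmem)⟩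
    · exact Set.toFinite _
  have hqpos : ∀ e : ℕ, 0 < q ^ e := fun e => Nat.pow_pos hq0
  have hmpos : ∀ e : ℕ, 0 < m ^ e := fun e => Nat.pow_pos hm0
  have hkey_q : q ^ k * q ^ rJ < (q ^ k * PJ) * q ^ rE := by
    calc q ^ k * q ^ rJ = (Nat.card ↥(HJ G Finset.univ q) * q ^ rE) * q ^ rJ := by
          rw [hcardEq]
      _ = Nat.card ↥(HJ G Finset.univ q) * (q ^ rE * q ^ rJ) := by ring
      _ < Nat.card ↥(HJ G J q) * (q ^ rE * q ^ rJ) := by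
          exact (mul_lt_mul_iff_left₀ (Nat.mul_pos (hqpos rE) (hqpos rJ))).mpr hlt_q
      _ = (Nat.card ↥(HJ G J q) * q ^ rJ) * q ^ rE := by ring
      _ = (q ^ k * PJ) * q ^ rE := by rw [hcardJq]
  have hC : rJ < rE ∨ 1 < PJ := by
    by_contra hcon
    push_neg at hcon
    obtain ⟨h1, h2⟩ := hcon
    have hre : rJ = rE := le_antisymm hrr h1
    have hP1 : PJ = 1 := le_antisymm h2 hPJpos
    rw [hre, hP1, mul_one] at hkey_q
    exact lt_irrefl _ hkey_q
  have hkey_m : m ^ k * m ^ rJ < (m ^ k * PJ) * m ^ rE := by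
    rcases hC with hlt | hlt
    · have h1 : m ^ rJ < m ^ rE := Nat.pow_lt_pow_right (by omega) hlt
      calc m ^ k * m ^ rJ < m ^ k * m ^ rE := (mul_lt_mul_iff_right₀ (hmpos k)).mpr h1
        _ ≤ (m ^ k * PJ) * m ^ rE :=
            Nat.mul_le_mul_right _ (Nat.le_mul_of_pos_right _ hPJpos)
    · have hstep : m ^ k * m ^ rJ < (m ^ k * PJ) * m ^ rJ :=
        (mul_lt_mul_iff_left₀ (hmpos rJ)).mpr
          ((Nat.lt_mul_iff_one_lt_right (hmpos k)).mpr hlt)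
      calc m ^ k * m ^ rJ < (m ^ k * PJ) * m ^ rJ := hstep
        _ ≤ (m ^ k * PJ) * m ^ rE :=
            Nat.mul_le_mul_left _ (Nat.pow_le_pow_right (by omega) hrr)
  have hlt_m : Nat.card ↥(HJ G Finset.univ m) < Nat.card ↥(HJ G J m) := by
    have h1 : (Nat.card ↥(HJ G Finset.univ m) * (m ^ rE * m ^ rJ))
        < Nat.card ↥(HJ G J m) * (m ^ rE * m ^ rJ) := by
      calc Nat.card ↥(HJ G Finset.univ m) * (m ^ rE * m ^ rJ)
          = (Nat.card ↥(HJ G Finset.univ m) * m ^ rE) * m ^ rJ := by ring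
        _ = m ^ k * m ^ rJ := by rw [hcardEm]
        _ < (m ^ k * PJ) * m ^ rE := hkey_m
        _ = (Nat.card ↥(HJ G J m) * m ^ rJ) * m ^ rE := by rw [hcardJm]
        _ = Nat.card ↥(HJ G J m) * (m ^ rE * m ^ rJ) := by ring
    exact lt_of_mul_lt_mul_right h1 (Nat.zero_le _)
  have hnotsub : ¬ (HJ G J m ⊆ HJ G Finset.univ m) := by
    intro hsub
    have hle : Nat.card ↥(HJ G J m) ≤ Nat.card ↥(HJ G Finset.univ m) := by
      rw [Nat.card_coe_set_eq, Nat.card_coe_set_eq]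
      exact Set.ncard_le_ncard hsub (Set.toFinite _)
    omega
  obtain ⟨v, hvJ, hvE⟩ := Set.not_subset.mp hnotsub
  exact ⟨v, hvJ, fun h0 => hvE ((mem_HJ_univ_iff G m v).mpr h0)⟩

lemma lift_codeword (G : Matrix (Fin k) (Fin n) ℤ) {m q : ℕ}
    (hm0 : 0 < m) (hq0 : 0 < q) (hdvd : m ∣ q) (v : Fin k → ZMod m) :
    ∃ u : Fin k → ZMod q, ∀ j,
      (Matrix.vecMul u (Gmod G q) j = 0 ↔ Matrix.vecMul v (Gmod G m) j = 0) := by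
  haveI : NeZero q := ⟨hq0.ne'⟩
  haveI : NeZero m := ⟨hm0.ne'⟩
  set t : ℕ := q / m with ht
  have htq : (m : ℤ) * t = q := by exact_mod_cast Nat.mul_div_cancel' hdvd
  have ht0 : (t : ℤ) ≠ 0 := by
    have : 0 < t := Nat.div_pos (Nat.le_of_dvd hq0 hdvd) hm0
    exact_mod_cast this.ne'
  set S : Fin n → ℤ := fun j => ∑ i, ((v i).val : ℤ) * G i j with hS
  set u : Fin k → ZMod q := fun i => (t : ZMod q) * (((v i).val : ℕ) : ZMod q) with hu
  refine ⟨u, fun j => ?_⟩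
  have hq_side : Matrix.vecMul u (Gmod G q) j = (((t : ℤ) * S j : ℤ) : ZMod q) := by
    rw [vecMul_apply]
    simp only [hu, Gmod, Matrix.map_apply, hS]
    push_cast [Finset.mul_sum]
    exact Finset.sum_congr rfl fun i _ => by ring
  have hm_side : Matrix.vecMul v (Gmod G m) j = ((S j : ℤ) : ZMod m) := by
    rw [vecMul_apply]
    simp only [Gmod, Matrix.map_apply, hS]
    push_cast
    refine Finset.sum_congr rfl fun i _ => ?_
    congr 1
    exact (ZMod.natCast_rightInverse (v i)).symm
  rw [hq_side, hm_side, ZMod.intCast_zmod_eq_zero_iff_dvd,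
    ZMod.intCast_zmod_eq_zero_iff_dvd]
  have hqz : (q : ℤ) = (t : ℤ) * (m : ℤ) := by rw [← htq]; ring
  rw [hqz]
  constructor
  · rintro ⟨c, hc⟩
    refine ⟨c, ?_⟩
    have h2 : (t : ℤ) * S j = (t : ℤ) * ((m : ℤ) * c) := by rw [hc]; ring
    exact mul_left_cancel₀ ht0 h2
  · rintro ⟨c, hc⟩
    exact ⟨c, by rw [hc]; ring⟩

lemma hammingNorm_mono {ι : Type*} [Fintype ι] {β β' : Type*}
    [DecidableEq β] [DecidableEq β'] [Zero β] [Zero β']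
    {x : ι → β} {y : ι → β'} (h : ∀ j, y j ≠ 0 → x j ≠ 0) :
    hammingNorm y ≤ hammingNorm x := by
  apply Finset.card_le_card
  intro j hj
  rw [Finset.mem_filter] at hj ⊢
  exact ⟨hj.1, h j hj.2⟩

end FINAL

theorem stmt1 (k n : ℕ) (hk : 1 ≤ k) (hn : 1 ≤ n) (G : Matrix (Fin k) (Fin n) ℤ)
    (hG : ∀ j : Fin n, ∃ i : Fin k, G i j ≠ 0)
    (m : ℕ) (hm2 : 2 ≤ m) (hmdvd : m ∣ lcmPeriod G)
    (hcop : Nat.gcd m (elemDiv G Finset.univ (rk G Finset.univ)) = 1) :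
    ∀ q : ℕ, 0 < q → Nat.gcd q (lcmPeriod G) = m → minWt G q = minWt G m := by
  intro q hq0 hgcd
  have hmq : m ∣ q := by rw [← hgcd]; exact Nat.gcd_dvd_left _ _
  have hm0 : 0 < m := by omega
  haveI : NeZero q := ⟨hq0.ne'⟩
  haveI : NeZero m := ⟨hm0.ne'⟩
  apply le_antisymm
  · -- minWt q ≤ minWt m : lift codewords mod m to mod q
    refine le_iInf fun c => le_iInf fun hc => le_iInf fun hc0 => ?_
    obtain ⟨v, hv0⟩ := hc
    have hv : Matrix.vecMul v (Gmod G m) = c := hv0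
    obtain ⟨u, hu⟩ := lift_codeword G hm0 hq0 hmq v
    set c' := Matrix.vecMul u (Gmod G q) with hc'
    have hsupp : ∀ j, c' j = 0 ↔ c j = 0 := by
      intro j
      rw [← hv]
      exact hu j
    have hc'0 : c' ≠ 0 := by
      intro h0
      apply hc0
      funext j
      have := (hsupp j).mp (by rw [h0]; rfl)
      exact this
    have hnorm : hammingNorm c' = hammingNorm c := by
      apply le_antisymm
      · exact hammingNorm_mono fun j hj hcj => hj ((hsupp j).mpr hcj)
      · exact hammingNorm_mono fun j hj hcj => hj ((hsupp j).mp hcj)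
    calc minWt G q ≤ (hammingNorm c' : ℕ∞) :=
          iInf_le_of_le c' (iInf_le_of_le ⟨u, rfl⟩ (iInf_le_of_le hc'0 le_rfl))
      _ = (hammingNorm c : ℕ∞) := by rw [hnorm]
  · -- minWt m ≤ minWt q : transfer
    refine le_iInf fun c => le_iInf fun hc => le_iInf fun hc0 => ?_
    obtain ⟨u, hu0⟩ := hc
    have hu : Matrix.vecMul u (Gmod G q) = c := hu0
    classical
    set J : Finset (Fin n) := Finset.univ.filter (fun j => c j = 0) with hJ
    have hW : ∃ u' : Fin k → ZMod q, u' ∈ HJ G J q ∧ Matrix.vecMul u' (Gmod G q) ≠ 0 := by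
      refine ⟨u, ?_, by rw [hu]; exact hc0⟩
      intro j hj
      rw [hu]
      exact (Finset.mem_filter.mp hj).2
    obtain ⟨v, hvJ, hvne⟩ := transfer G hn m hm2 hcop q hq0 hgcd J hW
    set c' := Matrix.vecMul v (Gmod G m) with hc'
    have hnorm : hammingNorm c' ≤ hammingNorm c := by
      apply hammingNorm_mono
      intro j hj hcj
      exact hj (hvJ j (Finset.mem_filter.mpr ⟨Finset.mem_univ j, hcj⟩))
    calc minWt G m ≤ (hammingNorm c' : ℕ∞) :=
          iInf_le_of_le c' (iInf_le_of_le ⟨v, rfl⟩ (iInf_le_of_le hvne le_rfl))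
      _ ≤ (hammingNorm c : ℕ∞) := by exact_mod_cast Nat.cast_le.mpr hnorm

end ArrCode
end

section
/- For every q ∈ ℤ_{>0} and every subset J ⊆ E, #{ c ∈ C_G(q) : supp(c) = E ∖ J } · #H_E(q) = #( H_J(q) ∖ ⋃_{j ∈ E∖J} H_{{j}}(q) ), where supp(c) denotes the set of indices of nonzero coordinates of c. -/
open scoped BigOperators

namespace ArrCode

set_option maxHeartbeats 2000000 in
theorem stmt4 (k n : ℕ) (hk : 1 ≤ k) (hn : 1 ≤ n) (G : Matrix (Fin k) (Fin n) ℤ)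
    (hG : ∀ j : Fin n, ∃ i : Fin k, G i j ≠ 0)
    (q : ℕ) (hq : 0 < q) (J : Finset (Fin n)) :
    {c ∈ code G q | (Finset.univ.filter fun j => c j ≠ 0) = Jᶜ}.ncard *
        (HJ G Finset.univ q).ncard =
      (HJ G J q \ ⋃ j ∈ (↑(Jᶜ) : Set (Fin n)), HJ G {j} q).ncard := by
  classical
  haveI : NeZero q := ⟨hq.ne'⟩
  set φ : (Fin k → ZMod q) → (Fin n → ZMod q) :=
    fun u => Matrix.vecMul u (Gmod G q) with hφ
  set T : Set (Fin n → ZMod q) :=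
    {c ∈ code G q | (Finset.univ.filter fun j => c j ≠ 0) = Jᶜ} with hT
  -- The RHS set is the preimage of T under φ.
  have hpre : (HJ G J q \ ⋃ j ∈ (↑(Jᶜ) : Set (Fin n)), HJ G {j} q) = φ ⁻¹' T := by
    ext u
    simp only [Set.mem_diff, Set.mem_iUnion, Set.mem_preimage, hT, Set.mem_setOf_eq,
      HJ, Finset.mem_coe, Finset.mem_compl, not_exists]
    constructor
    · rintro ⟨h1, h2⟩
      refine ⟨⟨u, rfl⟩, ?_⟩
      ext j
      simp only [Finset.mem_filter, Finset.mem_univ, true_and, Finset.mem_compl]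
      constructor
      · intro hne hj; exact hne (h1 j hj)
      · intro hj h0
        exact h2 j hj (by intro j' hj'; simp only [Finset.mem_singleton] at hj'; subst hj'; exact h0)
    · rintro ⟨-, h2⟩
      have key : ∀ j : Fin n, φ u j ≠ 0 ↔ j ∉ J := by
        intro j
        constructor
        · intro hne hj
          have : j ∈ Jᶜ := by rw [← h2]; simp [hne]
          exact (Finset.mem_compl.mp this) hj
        · intro hj
          have : j ∈ (Finset.univ.filter fun j => φ u j ≠ 0) := by
            rw [h2]; exact Finset.mem_compl.mpr hj
          simpa using this
      refine ⟨fun j hj => by_contra fun h0 => (key j).mp h0 hj, ?_⟩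
      intro j hj hmem
      exact (key j).mpr hj (hmem j (Finset.mem_singleton_self j))
  -- kernel description
  have hker : HJ G Finset.univ q = {u | φ u = 0} := by
    ext u
    simp [HJ, hφ, funext_iff]
  -- each fiber over a codeword has the same cardinality as the kernel
  have hfiber : ∀ c ∈ code G q, {u | φ u = c}.ncard = {u | φ u = 0}.ncard := by
    rintro c ⟨u₀, rfl⟩
    have himg : {u | φ u = φ u₀} = (fun v => u₀ + v) '' {u | φ u = 0} := by
      ext u
      simp only [Set.mem_setOf_eq, Set.mem_image]
      constructor
      · intro h
        refine ⟨u - u₀, ?_, by ring⟩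
        simp only [Set.mem_setOf_eq, hφ, Matrix.sub_vecMul] at h ⊢
        rw [h, sub_self]
      · rintro ⟨v, hv, rfl⟩
        simp only [Set.mem_setOf_eq, hφ, Matrix.add_vecMul] at hv ⊢
        rw [hv, add_zero]
    rw [himg, Set.ncard_image_of_injective _ (add_right_injective u₀)]
  have hstep : ∀ c ∈ T.toFinset,
      ((φ ⁻¹' T).toFinset.filter fun u => φ u = c).card = (HJ G Finset.univ q).ncard := by
    intro c hc
    rw [Set.mem_toFinset] at hc
    have : ((φ ⁻¹' T).toFinset.filter fun u => φ u = c) = {u | φ u = c}.toFinset := by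
      ext u
      simp only [Finset.mem_filter, Set.mem_toFinset, Set.mem_preimage, Set.mem_setOf_eq]
      constructor
      · rintro ⟨-, h⟩; exact h
      · intro h; exact ⟨h ▸ hc, h⟩
    rw [this, ← Set.ncard_eq_toFinset_card', hfiber c hc.1, hker]
  rw [hpre, Set.ncard_eq_toFinset_card' (φ ⁻¹' T),
    Finset.card_eq_sum_card_fiberwise (f := φ) (s := (φ ⁻¹' T).toFinset) (t := T.toFinset)
      (fun u hu => by rw [Finset.mem_coe, Set.mem_toFinset] at hu ⊢; exact hu),
    Finset.sum_congr rfl hstep, Finset.sum_const, smul_eq_mul,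
    ← Set.ncard_eq_toFinset_card' T]

end ArrCode
end
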